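/- arXiv:2305.10199 — 4 statements merged into one kernel-verified Lean document; each statement's English description precedes it below -/
import Mathlib

section
/- If q is a monic real polynomial with n-1 distinct real zeros s_1 < ... < s_{n-1}, λ_ℓ > 0 for each ℓ, and p(t) = (t - s)q(t) - Σ_ℓ λ_ℓ q(t)/(t - s_ℓ) (i.e. p/q = t - s - Σ λ_ℓ/(t - s_ℓ)), then the function p/q is strictly increasing on each of the n intervals determined by the zeros of q and p has exactly one zero in each such interval. -/
open Polynomial Finset Filter Topology

private lemma aux_div_le {c a b : ℝ} (hc : 0 ≤ c) (hab : a ≤ b) (h : 0 < a ∨ b < 0) :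
    c / b ≤ c / a := by
  rcases h with h | h
  · have hb : 0 < b := lt_of_lt_of_le h hab
    rw [div_le_div_iff₀ hb h]
    exact mul_le_mul_of_nonneg_left hab hc
  · have ha : a < 0 := lt_of_le_of_lt hab h
    have key : c / (-a) ≤ c / (-b) := by
      rw [div_le_div_iff₀ (by linarith) (by linarith)]
      nlinarith
    have e1 : c / (-a) = -(c / a) := by rw [div_neg]
    have e2 : c / (-b) = -(c / b) := by rw [div_neg]
    rw [e1, e2] at key
    linarith

private lemma aux_tendsto_sub_nhdsGT (c : ℝ) :
    Filter.Tendsto (fun t : ℝ => t - c) (𝓝[>] c) (𝓝[>] (0 : ℝ)) := by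
  rw [tendsto_nhdsWithin_iff]
  constructor
  · have h := (continuous_sub_right c).tendsto c
    rw [sub_self] at h
    exact h.mono_left nhdsWithin_le_nhds
  · filter_upwards [self_mem_nhdsWithin] with t ht
    exact sub_pos.2 (Set.mem_Ioi.1 ht)

private lemma aux_tendsto_sub_nhdsLT (c : ℝ) :
    Filter.Tendsto (fun t : ℝ => c - t) (𝓝[<] c) (𝓝[>] (0 : ℝ)) := by
  rw [tendsto_nhdsWithin_iff]
  constructor
  · have hcont : Continuous (fun t : ℝ => c - t) := continuous_const.sub continuous_id
    have h := hcont.tendsto c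
    rw [sub_self] at h
    exact h.mono_left nhdsWithin_le_nhds
  · filter_upwards [self_mem_nhdsWithin] with t ht
    exact sub_pos.2 (Set.mem_Iio.1 ht)

theorem strictMonoOn_quotient_and_unique_zero_in_each_interval
    {k : ℕ} (s₀ : ℝ) (s : Fin k → ℝ) (hs : StrictMono s)
    (lam : Fin k → ℝ) (hlam : ∀ ℓ, 0 < lam ℓ)
    (q p : Polynomial ℝ)
    (hq : q = ∏ ℓ : Fin k, (X - C (s ℓ)))
    (hp : p = (X - C s₀) * q - ∑ ℓ : Fin k, C (lam ℓ) * ∏ m ∈ univ.erase ℓ, (X - C (s m)))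
    -- the `n` open intervals determined by the zeros of `q`:
    (I : Fin (k + 1) → Set ℝ)
    (hI : ∀ ℓ : Fin (k + 1), I ℓ =
      {t : ℝ | ∀ m : Fin k, ((m : ℕ) < (ℓ : ℕ) → s m < t) ∧ ((ℓ : ℕ) ≤ (m : ℕ) → t < s m)}) :
    ∀ ℓ : Fin (k + 1),
      StrictMonoOn (fun t : ℝ => p.eval t / q.eval t) (I ℓ) ∧
      (∃! t : ℝ, t ∈ I ℓ ∧ p.eval t = 0) := by
  intro ℓ
  set f : ℝ → ℝ := fun t => t - s₀ - ∑ m : Fin k, lam m / (t - s m) with hfdef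
  have hmem : ∀ t : ℝ, t ∈ I ℓ ↔
      ∀ m : Fin k, ((m : ℕ) < (ℓ : ℕ) → s m < t) ∧ ((ℓ : ℕ) ≤ (m : ℕ) → t < s m) := by
    intro t; rw [hI ℓ]; exact Iff.rfl
  have hne : ∀ t ∈ I ℓ, ∀ m : Fin k, t ≠ s m := by
    intro t ht m
    rcases lt_or_ge (m : ℕ) (ℓ : ℕ) with h | h
    · exact (((hmem t).1 ht m).1 h).ne'
    · exact (((hmem t).1 ht m).2 h).ne
  have hqe : ∀ t : ℝ, q.eval t = ∏ m : Fin k, (t - s m) := by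
    intro t; simp [hq, eval_prod]
  have hqne : ∀ t ∈ I ℓ, q.eval t ≠ 0 := by
    intro t ht
    rw [hqe]
    exact Finset.prod_ne_zero_iff.2 fun m _ => sub_ne_zero.2 (hne t ht m)
  have hpqf : ∀ t : ℝ, (∀ m : Fin k, t ≠ s m) → p.eval t = q.eval t * f t := by
    intro t ht
    have key : ∀ m : Fin k, lam m * ∏ m' ∈ univ.erase m, (t - s m')
        = q.eval t * (lam m / (t - s m)) := by
      intro m
      rw [hqe, ← Finset.mul_prod_erase univ (fun m' => t - s m') (mem_univ m)]
      have hz : t - s m ≠ 0 := sub_ne_zero.2 (ht m)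
      field_simp
    calc p.eval t
        = (t - s₀) * q.eval t - ∑ m : Fin k, lam m * ∏ m' ∈ univ.erase m, (t - s m') := by
          simp [hp, eval_finset_sum, eval_prod]
      _ = (t - s₀) * q.eval t - ∑ m : Fin k, q.eval t * (lam m / (t - s m)) := by
          rw [Finset.sum_congr rfl fun m _ => key m]
      _ = q.eval t * f t := by
          show _ = q.eval t * (t - s₀ - ∑ m : Fin k, lam m / (t - s m))
          rw [mul_sub, Finset.mul_sum]
          ring
  have hmono : StrictMonoOn f (I ℓ) := by
    intro x hx y hy hxy
    have hsum : ∀ m ∈ (univ : Finset (Fin k)), lam m / (y - s m) ≤ lam m / (x - s m) := by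
      intro m _
      rcases lt_or_ge (m : ℕ) (ℓ : ℕ) with h | h
      · exact aux_div_le (hlam m).le (by linarith) (Or.inl (sub_pos.2 (((hmem x).1 hx m).1 h)))
      · exact aux_div_le (hlam m).le (by linarith) (Or.inr (sub_neg.2 (((hmem y).1 hy m).2 h)))
    have := Finset.sum_le_sum hsum
    simp only [hfdef]
    linarith
  have hmono' : StrictMonoOn (fun t : ℝ => p.eval t / q.eval t) (I ℓ) := by
    intro x hx y hy hxy
    have ex : p.eval x / q.eval x = f x := by
      rw [hpqf x (hne x hx), mul_div_cancel_left₀ _ (hqne x hx)]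
    have ey : p.eval y / q.eval y = f y := by
      rw [hpqf y (hne y hy), mul_div_cancel_left₀ _ (hqne y hy)]
    simp only [ex, ey]
    exact hmono hx hy hxy
  have hIcc : ∀ a ∈ I ℓ, ∀ b ∈ I ℓ, Set.Icc a b ⊆ I ℓ := by
    intro a ha b hb x hx
    rw [hmem]
    intro m
    constructor
    · intro h; exact lt_of_lt_of_le (((hmem a).1 ha m).1 h) hx.1
    · intro h; exact lt_of_le_of_lt hx.2 (((hmem b).1 hb m).2 h)
  have hcont : ContinuousOn f (I ℓ) := by
    apply ContinuousOn.sub ((continuous_id.sub continuous_const).continuousOn)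
    apply continuousOn_finset_sum
    intro m _
    exact continuousOn_const.div ((continuous_id.sub continuous_const).continuousOn)
      fun t ht => sub_ne_zero.2 (hne t ht m)
  -- existence of a point with negative value
  have ha : ∃ a ∈ I ℓ, f a < 0 := by
    by_cases hl0 : (ℓ : ℕ) = 0
    · have h1 : Tendsto (fun t : ℝ => t - s₀) atBot atBot := by
        simpa [sub_eq_add_neg] using tendsto_atBot_add_const_right atBot (-s₀) tendsto_id
      have h2 : Tendsto (fun t : ℝ => ∑ m : Fin k, lam m / (t - s m)) atBot (𝓝 0) := by
        have hterm : ∀ m : Fin k, Tendsto (fun t : ℝ => lam m / (t - s m)) atBot (𝓝 0) := by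
          intro m
          have hst : Tendsto (fun t : ℝ => s m - t) atBot atTop := by
            simpa [sub_eq_add_neg, add_comm] using
              tendsto_atTop_add_const_left atBot (s m) tendsto_neg_atBot_atTop
          have h0 := (hst.const_div_atTop (lam m)).neg
          rw [neg_zero] at h0
          exact h0.congr fun t => by
            rw [show s m - t = -(t - s m) by ring, div_neg, neg_neg]
        have := tendsto_finset_sum (univ : Finset (Fin k)) fun m _ => hterm m
        simpa using this
      have h3 : Tendsto f atBot atBot := by
        have := h1.atBot_add h2.neg
        simpa [hfdef, sub_eq_add_neg] using this
      have h4 : ∀ᶠ t : ℝ in atBot, t ∈ I ℓ := by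
        have hall : ∀ᶠ t : ℝ in atBot, ∀ m : Fin k, t < s m :=
          eventually_all.2 fun m => eventually_lt_atBot (s m)
        filter_upwards [hall] with t ht
        rw [hmem]
        intro m
        exact ⟨fun hmℓ => absurd hmℓ (by omega), fun _ => ht m⟩
      obtain ⟨a, ha1, ha2⟩ := (h4.and (h3.eventually (eventually_lt_atBot 0))).exists
      exact ⟨a, ha1, ha2⟩
    · set j₀ : Fin k := ⟨(ℓ : ℕ) - 1, by omega⟩ with hj₀
      have ht₀ : ∃ t₀ : ℝ, s j₀ < t₀ ∧ Set.Ioo (s j₀) t₀ ⊆ I ℓ := by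
        by_cases hlk : (ℓ : ℕ) < k
        · have hlt : s j₀ < s ⟨(ℓ : ℕ), hlk⟩ := hs (by rw [Fin.lt_def]; show (ℓ : ℕ) - 1 < ℓ; omega)
          refine ⟨(s j₀ + s ⟨(ℓ : ℕ), hlk⟩) / 2, by linarith, ?_⟩
          intro t ht
          rw [hmem]
          intro m
          constructor
          · intro hm
            have : s m ≤ s j₀ := hs.monotone (by simp [Fin.le_def, hj₀]; omega)
            have := ht.1; linarith
          · intro hm
            have : s ⟨(ℓ : ℕ), hlk⟩ ≤ s m := hs.monotone (by simp [Fin.le_def]; omega)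
            have := ht.2; linarith
        · refine ⟨s j₀ + 1, by linarith, ?_⟩
          intro t ht
          rw [hmem]
          intro m
          constructor
          · intro hm
            have : s m ≤ s j₀ := hs.monotone (by simp [Fin.le_def, hj₀]; omega)
            have := ht.1; linarith
          · intro hm
            exact absurd hm (by omega)
      obtain ⟨t₀, ht₀1, ht₀2⟩ := ht₀
      have hsplit : ∀ t : ℝ, f t = -(lam j₀ / (t - s j₀)) +
          (t - s₀ - ∑ m ∈ univ.erase j₀, lam m / (t - s m)) := by
        intro t
        show t - s₀ - ∑ m : Fin k, lam m / (t - s m) = _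
        rw [← Finset.add_sum_erase univ (fun m => lam m / (t - s m)) (mem_univ j₀)]
        ring
      have hA : Tendsto (fun t : ℝ => -(lam j₀ / (t - s j₀))) (𝓝[>] (s j₀)) atBot := by
        have h1 := aux_tendsto_sub_nhdsGT (s j₀)
        have h2 : Tendsto (fun t : ℝ => lam j₀ / (t - s j₀)) (𝓝[>] (s j₀)) atTop := by
          have := Tendsto.const_mul_atTop (hlam j₀) (tendsto_inv_nhdsGT_zero.comp h1)
          simpa [div_eq_mul_inv, Function.comp] using this
        exact tendsto_neg_atTop_atBot.comp h2
      have hB : Tendsto (fun t : ℝ => t - s₀ - ∑ m ∈ univ.erase j₀, lam m / (t - s m))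
          (𝓝[>] (s j₀)) (𝓝 (s j₀ - s₀ - ∑ m ∈ univ.erase j₀, lam m / (s j₀ - s m))) := by
        apply Tendsto.mono_left _ nhdsWithin_le_nhds
        apply Tendsto.sub ((continuous_id.sub continuous_const).tendsto _)
        apply tendsto_finset_sum
        intro m hm
        have hz : s j₀ - s m ≠ 0 :=
          sub_ne_zero.2 fun h => (Finset.mem_erase.1 hm).1 (hs.injective h.symm)
        exact tendsto_const_nhds.div ((continuous_id.sub continuous_const).tendsto _) hz
      have hAB : Tendsto f (𝓝[>] (s j₀)) atBot :=
        (hA.atBot_add hB).congr fun t => (hsplit t).symm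
      have hev : ∀ᶠ t in 𝓝[>] (s j₀), t ∈ Set.Ioo (s j₀) t₀ :=
        Ioo_mem_nhdsGT_of_mem ⟨le_refl _, ht₀1⟩
      obtain ⟨a, ha1, ha2⟩ := (hev.and (hAB.eventually (eventually_lt_atBot 0))).exists
      exact ⟨a, ht₀2 ha1, ha2⟩
  -- existence of a point with positive value
  have hb : ∃ b ∈ I ℓ, 0 < f b := by
    by_cases hlk : (ℓ : ℕ) = k
    · have h1 : Tendsto (fun t : ℝ => t - s₀) atTop atTop := by
        simpa [sub_eq_add_neg] using tendsto_atTop_add_const_right atTop (-s₀) tendsto_id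
      have h2 : Tendsto (fun t : ℝ => ∑ m : Fin k, lam m / (t - s m)) atTop (𝓝 0) := by
        have hterm : ∀ m : Fin k, Tendsto (fun t : ℝ => lam m / (t - s m)) atTop (𝓝 0) := by
          intro m
          have hst : Tendsto (fun t : ℝ => t - s m) atTop atTop := by
            simpa [sub_eq_add_neg] using tendsto_atTop_add_const_right atTop (-(s m)) tendsto_id
          exact hst.const_div_atTop (lam m)
        have := tendsto_finset_sum (univ : Finset (Fin k)) fun m _ => hterm m
        simpa using this
      have h3 : Tendsto f atTop atTop := by
        have := h1.atTop_add h2.neg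
        simpa [hfdef, sub_eq_add_neg] using this
      have h4 : ∀ᶠ t : ℝ in atTop, t ∈ I ℓ := by
        have hall : ∀ᶠ t : ℝ in atTop, ∀ m : Fin k, s m < t :=
          eventually_all.2 fun m => eventually_gt_atTop (s m)
        filter_upwards [hall] with t ht
        rw [hmem]
        intro m
        exact ⟨fun _ => ht m, fun hmℓ => absurd hmℓ (by omega)⟩
      obtain ⟨b, hb1, hb2⟩ := (h4.and (h3.eventually (eventually_gt_atTop 0))).exists
      exact ⟨b, hb1, hb2⟩
    · have hlk' : (ℓ : ℕ) < k := lt_of_le_of_ne (by omega) hlk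
      set j : Fin k := ⟨(ℓ : ℕ), hlk'⟩ with hj
      have ht₀ : ∃ t₀ : ℝ, t₀ < s j ∧ Set.Ioo t₀ (s j) ⊆ I ℓ := by
        by_cases hl0 : (ℓ : ℕ) = 0
        · refine ⟨s j - 1, by linarith, ?_⟩
          intro t ht
          rw [hmem]
          intro m
          constructor
          · intro hm; exact absurd hm (by omega)
          · intro hm
            have : s j ≤ s m := hs.monotone (by simp [Fin.le_def, hj]; omega)
            have := ht.2; linarith
        · set j₀ : Fin k := ⟨(ℓ : ℕ) - 1, by omega⟩ with hj₀
          have hlt : s j₀ < s j := hs (by rw [Fin.lt_def]; show (ℓ : ℕ) - 1 < ℓ; omega)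
          refine ⟨(s j₀ + s j) / 2, by linarith, ?_⟩
          intro t ht
          rw [hmem]
          intro m
          constructor
          · intro hm
            have : s m ≤ s j₀ := hs.monotone (by simp [Fin.le_def, hj₀]; omega)
            have := ht.1; linarith
          · intro hm
            have : s j ≤ s m := hs.monotone (by simp [Fin.le_def, hj]; omega)
            have := ht.2; linarith
      obtain ⟨t₀, ht₀1, ht₀2⟩ := ht₀
      have hsplit : ∀ t : ℝ, f t = lam j / (s j - t) +
          (t - s₀ - ∑ m ∈ univ.erase j, lam m / (t - s m)) := by
        intro t
        show t - s₀ - ∑ m : Fin k, lam m / (t - s m) = _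
        rw [← Finset.add_sum_erase univ (fun m => lam m / (t - s m)) (mem_univ j)]
        have : lam j / (t - s j) = -(lam j / (s j - t)) := by
          rw [← neg_sub (s j) t, div_neg]
        rw [this]
        ring
      have hA : Tendsto (fun t : ℝ => lam j / (s j - t)) (𝓝[<] (s j)) atTop := by
        have h1 := aux_tendsto_sub_nhdsLT (s j)
        have := Tendsto.const_mul_atTop (hlam j) (tendsto_inv_nhdsGT_zero.comp h1)
        simpa [div_eq_mul_inv, Function.comp] using this
      have hB : Tendsto (fun t : ℝ => t - s₀ - ∑ m ∈ univ.erase j, lam m / (t - s m))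
          (𝓝[<] (s j)) (𝓝 (s j - s₀ - ∑ m ∈ univ.erase j, lam m / (s j - s m))) := by
        apply Tendsto.mono_left _ nhdsWithin_le_nhds
        apply Tendsto.sub ((continuous_id.sub continuous_const).tendsto _)
        apply tendsto_finset_sum
        intro m hm
        have hz : s j - s m ≠ 0 :=
          sub_ne_zero.2 fun h => (Finset.mem_erase.1 hm).1 (hs.injective h.symm)
        exact tendsto_const_nhds.div ((continuous_id.sub continuous_const).tendsto _) hz
      have hAB : Tendsto f (𝓝[<] (s j)) atTop :=
        (hA.atTop_add hB).congr fun t => (hsplit t).symm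
      have hev : ∀ᶠ t in 𝓝[<] (s j), t ∈ Set.Ioo t₀ (s j) :=
        Ioo_mem_nhdsLT_of_mem ⟨ht₀1, le_refl _⟩
      obtain ⟨b, hb1, hb2⟩ := (hev.and (hAB.eventually (eventually_gt_atTop 0))).exists
      exact ⟨b, ht₀2 hb1, hb2⟩
  obtain ⟨a, haI, hfa⟩ := ha
  obtain ⟨b, hbI, hfb⟩ := hb
  have hab : a < b := by
    rcases lt_trichotomy a b with h | h | h
    · exact h
    · subst h; linarith
    · have := hmono hbI haI h; linarith
  have hsub : Set.Icc a b ⊆ I ℓ := hIcc a haI b hbI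
  obtain ⟨c, hc1, hc2⟩ := intermediate_value_Icc hab.le (hcont.mono hsub) ⟨hfa.le, hfb.le⟩
  have hcI : c ∈ I ℓ := hsub hc1
  refine ⟨hmono', c, ⟨hcI, ?_⟩, ?_⟩
  · rw [hpqf c (hne c hcI), hc2, mul_zero]
  · rintro t ⟨htI, htp⟩
    have hft : f t = 0 := by
      have h := hpqf t (hne t htI)
      rw [htp] at h
      exact (mul_eq_zero.1 h.symm).resolve_left (hqne t htI)
    exact hmono.injOn htI hcI (by rw [hft, hc2])
end

section
/- Let A and B be real symmetric m×m matrices and suppose |θ_ℓ(A) - θ_ℓ(B)| = ‖A - B‖_op for some index ℓ. Then there exists a nonzero vector v lying in the span of the top and bottom eigenspaces of A - B that is simultaneously an eigenvector of A with eigenvalue θ_ℓ(A) and of B with eigenvalue θ_ℓ(B). -/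
set_option synthInstance.maxHeartbeats 1000000
set_option maxHeartbeats 1000000

open Polynomial Matrix Finset
open scoped RealInnerProductSpace

/-- The operator (spectral) norm of a real square matrix, acting on Euclidean space. -/
noncomputable def opNorm {m : ℕ} (M : Matrix (Fin m) (Fin m) ℝ) : ℝ :=
  ‖(Matrix.toEuclideanLin M).toContinuousLinearMap‖

section Aux

variable {n : ℕ}

private lemma eval_charpoly_det (M : Matrix (Fin n) (Fin n) ℝ) (t : ℝ) :
    M.charpoly.eval t = (Matrix.diagonal (fun _ => t) - M).det := by
  rw [Matrix.charpoly, ← Polynomial.coe_evalRingHom, RingHom.map_det]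
  congr 1
  ext i j
  by_cases h : i = j <;>
    simp [h, charmatrix_apply_eq, charmatrix_apply_ne, Matrix.diagonal, Matrix.sub_apply]

private lemma det_diag_sub_eq_prod {A : Matrix (Fin n) (Fin n) ℝ} (hA : A.IsHermitian) (t : ℝ) :
    (Matrix.diagonal (fun _ => t) - A).det = ∏ i, (t - hA.eigenvalues i) := by
  set U : Matrix (Fin n) (Fin n) ℝ := (hA.eigenvectorUnitary : Matrix (Fin n) (Fin n) ℝ) with hU
  have h1 : star U * U = 1 := Unitary.coe_star_mul_self hA.eigenvectorUnitary
  have h2 : star U * A * U = diagonal (RCLike.ofReal ∘ hA.eigenvalues) :=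
    by have := hA.conjStarAlgAut_star_eigenvectorUnitary; rwa [Unitary.conjStarAlgAut_star_apply] at this
  have key : star U * (Matrix.diagonal (fun _ => t) - A) * U
      = diagonal (fun i => t - hA.eigenvalues i) := by
    have hd : Matrix.diagonal (fun _ : Fin n => t) = t • (1 : Matrix (Fin n) (Fin n) ℝ) := by
      ext i j; by_cases h : i = j <;> simp [h, Matrix.diagonal, Matrix.one_apply]
    rw [Matrix.mul_sub, Matrix.sub_mul, h2, hd, Matrix.mul_smul, mul_one, Matrix.smul_mul, h1]
    ext i j
    by_cases h : i = j <;> simp [h, Matrix.diagonal, Matrix.one_apply, Matrix.sub_apply]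
  have hdet := congrArg Matrix.det key
  rw [Matrix.det_mul, Matrix.det_mul, Matrix.det_diagonal] at hdet
  have hUdet : (star U).det * U.det = 1 := by
    rw [← Matrix.det_mul, h1, Matrix.det_one]
  calc (Matrix.diagonal (fun _ => t) - A).det
      = (star U).det * (Matrix.diagonal (fun _ => t) - A).det * U.det := by
        rw [mul_comm ((star U).det), mul_assoc, hUdet, mul_one]
    _ = ∏ i, (t - hA.eigenvalues i) := hdet

private lemma count_eq (f g : Fin n → ℝ)
    (h : ∀ t : ℝ, ∏ i, (t - f i) = ∏ i, (t - g i))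
    (p : ℝ → Prop) [DecidablePred p] :
    (univ.filter (fun i => p (f i))).card = (univ.filter (fun i => p (g i))).card := by
  have hpoly : (∏ i, (X - C (f i)) : ℝ[X]) = ∏ i, (X - C (g i)) := by
    apply Polynomial.funext
    intro t
    simpa [Polynomial.eval_prod] using h t
  have hms : (univ.val.map f : Multiset ℝ) = univ.val.map g := by
    have h1 : ((univ.val.map f).map fun a => (X - C a : ℝ[X])).prod
        = ((univ.val.map g).map fun a => (X - C a : ℝ[X])).prod := by
      simpa [Finset.prod, Multiset.map_map, Function.comp_def] using hpoly
    have := congrArg Polynomial.roots h1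
    rwa [Polynomial.roots_multiset_prod_X_sub_C, Polynomial.roots_multiset_prod_X_sub_C] at this
  have hc := congrArg (Multiset.countP p) hms
  rw [Multiset.countP_map, Multiset.countP_map] at hc
  exact hc

private lemma repr_mulVec {M : Matrix (Fin n) (Fin n) ℝ} (hM : M.IsHermitian)
    (v : EuclideanSpace ℝ (Fin n)) (i : Fin n) :
    hM.eigenvectorBasis.repr (Matrix.toEuclideanLin M v) i
      = hM.eigenvalues i * hM.eigenvectorBasis.repr v i := by
  have hsym := (Matrix.isHermitian_iff_isSymmetric).1 hM
  have h1 : hM.eigenvectorBasis.repr (Matrix.toEuclideanLin M v) i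
      = ⟪hM.eigenvectorBasis i, Matrix.toEuclideanLin M v⟫ := by
    rw [OrthonormalBasis.repr_apply_apply]
  have h2 : Matrix.toEuclideanLin M (hM.eigenvectorBasis i)
      = hM.eigenvalues i • hM.eigenvectorBasis i := by
    have := hM.mulVec_eigenvectorBasis i
    apply (WithLp.equiv 2 _).injective
    simpa [Matrix.toEuclideanLin_apply] using this
  rw [h1, ← hsym (hM.eigenvectorBasis i) v, h2, inner_smul_left,
    OrthonormalBasis.repr_apply_apply]
  simp

private lemma repr_support (b : OrthonormalBasis (Fin n) ℝ (EuclideanSpace ℝ (Fin n)))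
    (S : Finset (Fin n)) (v : EuclideanSpace ℝ (Fin n))
    (hv : v ∈ Submodule.span ℝ (⇑b '' (S : Set (Fin n))))
    (j : Fin n) (hj : j ∉ S) : b.repr v j = 0 := by
  induction hv using Submodule.span_induction with
  | mem x hx =>
      obtain ⟨i, hi, rfl⟩ := hx
      rw [b.repr_self]
      simp only [EuclideanSpace.single_apply]
      rw [if_neg]; rintro rfl; exact hj hi
  | zero => simp
  | add x y _ _ hx hy => simp [hx, hy]
  | smul c x _ hx => simp [hx]

private lemma finrank_span_onb (b : OrthonormalBasis (Fin n) ℝ (EuclideanSpace ℝ (Fin n)))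
    (S : Finset (Fin n)) :
    Module.finrank ℝ (Submodule.span ℝ (⇑b '' (S : Set (Fin n)))) = S.card := by
  have hon : Orthonormal ℝ (fun i : S => b i) :=
    b.orthonormal.comp _ Subtype.val_injective
  have hli := hon.linearIndependent
  have := finrank_span_eq_card hli
  have hr : (Set.range fun i : S => b i) = ⇑b '' (S : Set (Fin n)) := by
    ext x; simp
  rw [hr] at this
  simpa using this

private lemma inner_repr (b : OrthonormalBasis (Fin n) ℝ (EuclideanSpace ℝ (Fin n)))
    (v w : EuclideanSpace ℝ (Fin n)) :
    ⟪v, w⟫ = ∑ i, b.repr v i * b.repr w i := by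
  have h := b.repr.inner_map_map v w
  rw [PiLp.inner_apply] at h
  simp only [RCLike.inner_apply, starRingEnd_apply, star_trivial] at h
  exact h.symm.trans (Finset.sum_congr rfl (fun i _ => mul_comm _ _))

private lemma abs_inner_le (M : Matrix (Fin n) (Fin n) ℝ) (v : EuclideanSpace ℝ (Fin n)) :
    |⟪v, Matrix.toEuclideanLin M v⟫| ≤ opNorm M * ‖v‖ ^ 2 := by
  have h1 := abs_real_inner_le_norm v (Matrix.toEuclideanLin M v)
  have h2 : ‖Matrix.toEuclideanLin M v‖ ≤ opNorm M * ‖v‖ := by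
    have := (Matrix.toEuclideanLin M).toContinuousLinearMap.le_opNorm v
    simpa [opNorm] using this
  nlinarith [norm_nonneg v, norm_nonneg (Matrix.toEuclideanLin M v)]

private lemma toEuclidean_smul_to_mulVec (M : Matrix (Fin n) (Fin n) ℝ) (v : Fin n → ℝ) (c : ℝ)
    (h : Matrix.toEuclideanLin M ((WithLp.equiv 2 _).symm v) =
      c • (WithLp.equiv 2 (Fin n → ℝ)).symm v) : M.mulVec v = c • v := by
  have := congrArg (WithLp.equiv 2 (Fin n → ℝ)) h
  simpa [Matrix.toEuclideanLin_apply] using this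

private lemma exists_eigvec (M : Matrix (Fin n) (Fin n) ℝ) (t : ℝ)
    (h : (Matrix.diagonal (fun _ => t) - M).det = 0) :
    ∃ w : Fin n → ℝ, w ≠ 0 ∧ M.mulVec w = t • w := by
  obtain ⟨w, hw0, hw⟩ := (Matrix.exists_mulVec_eq_zero_iff).2 h
  refine ⟨w, hw0, ?_⟩
  have h3 : Matrix.diagonal (fun _ => t) *ᵥ w - M *ᵥ w = 0 := by
    rw [← Matrix.sub_mulVec]; exact hw
  have hd : Matrix.diagonal (fun _ : Fin n => t) *ᵥ w = t • w := by
    funext i; simp [Matrix.mulVec_diagonal]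
  rw [hd] at h3
  funext i
  have := congrFun h3 i
  simp at this
  simpa [Pi.smul_apply] using by linarith [this]

private lemma eig_abs_le (M : Matrix (Fin n) (Fin n) ℝ) {t : ℝ} {w : Fin n → ℝ}
    (hw0 : w ≠ 0) (hw : M.mulVec w = t • w) : |t| ≤ opNorm M := by
  set v : EuclideanSpace ℝ (Fin n) := (WithLp.equiv 2 _).symm w with hv
  have hv0 : v ≠ 0 := by
    intro h; apply hw0
    have := congrArg (WithLp.equiv 2 (Fin n → ℝ)) h
    simpa [hv] using this
  have hTv : Matrix.toEuclideanLin M v = t • v := by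
    apply (WithLp.equiv 2 _).injective
    simp [Matrix.toEuclideanLin_apply, hv]
    exact hw
  have h1 : ⟪v, Matrix.toEuclideanLin M v⟫ = t * ‖v‖ ^ 2 := by
    rw [hTv, real_inner_smul_right, real_inner_self_eq_norm_sq]
  have h2 := abs_inner_le M v
  rw [h1, abs_mul, abs_of_nonneg (sq_nonneg ‖v‖)] at h2
  have hn : 0 < ‖v‖ ^ 2 := by
    have : 0 < ‖v‖ := norm_pos_iff.2 hv0
    positivity
  exact le_of_mul_le_mul_right h2 hn

private lemma forcing {k : ℕ} (c a : Fin k → ℝ) (lam : ℝ)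
    (h : ∀ i, c i ≠ 0 → lam ≤ a i)
    (hsum : ∑ i, a i * c i ^ 2 = lam * ∑ i, c i ^ 2) :
    ∀ i, a i * c i = lam * c i := by
  have hzero : ∑ i, (a i - lam) * c i ^ 2 = 0 := by
    rw [Finset.mul_sum] at hsum
    have : ∑ i, (a i - lam) * c i ^ 2 = ∑ i, a i * c i ^ 2 - ∑ i, lam * c i ^ 2 := by
      rw [← Finset.sum_sub_distrib]; apply Finset.sum_congr rfl; intro i _; ring
    rw [this, hsum]
    simp [Finset.mul_sum]
  have hnn : ∀ i ∈ univ, 0 ≤ (a i - lam) * c i ^ 2 := by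
    intro i _
    by_cases hc : c i = 0
    · simp [hc]
    · have := h i hc
      nlinarith [sq_nonneg (c i)]
  have heach := (Finset.sum_eq_zero_iff_of_nonneg hnn).1 hzero
  intro i
  have hi := heach i (mem_univ i)
  by_cases hc : c i = 0
  · simp [hc]
  · have h1 : a i - lam = 0 := by
      have : c i ^ 2 ≠ 0 := pow_ne_zero 2 hc
      exact (mul_eq_zero.1 hi).resolve_right this
    have : a i = lam := by linarith
    rw [this]

private lemma key (A B : Matrix (Fin (n + 1)) (Fin (n + 1)) ℝ)
    (hA : A.IsHermitian) (hB : B.IsHermitian)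
    (θA θB : Fin (n + 1) → ℝ) (hθA : Antitone θA) (hθB : Antitone θB)
    (hAeig : A.charpoly = ∏ ℓ : Fin (n + 1), (X - C (θA ℓ)))
    (hBeig : B.charpoly = ∏ ℓ : Fin (n + 1), (X - C (θB ℓ)))
    (ℓ : Fin (n + 1))
    (hcase : θA ℓ - θB ℓ = opNorm (A - B)) :
    ∃ v : Fin (n + 1) → ℝ, v ≠ 0 ∧ A.mulVec v = θA ℓ • v ∧ B.mulVec v = θB ℓ • v := by
  classical
  have hAt : ∀ t : ℝ, ∏ i, (t - hA.eigenvalues i) = ∏ i, (t - θA i) := by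
    intro t
    rw [← det_diag_sub_eq_prod hA t, ← eval_charpoly_det, hAeig]
    simp [Polynomial.eval_prod]
  have hBt : ∀ t : ℝ, ∏ i, (t - hB.eigenvalues i) = ∏ i, (t - θB i) := by
    intro t
    rw [← det_diag_sub_eq_prod hB t, ← eval_charpoly_det, hBeig]
    simp [Polynomial.eval_prod]
  set SA : Finset (Fin (n + 1)) := univ.filter (fun i => θA ℓ ≤ hA.eigenvalues i) with hSA
  set SB : Finset (Fin (n + 1)) := univ.filter (fun i => hB.eigenvalues i ≤ θB ℓ) with hSB
  have hcardA : (ℓ : ℕ) + 1 ≤ SA.card := by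
    rw [hSA, count_eq hA.eigenvalues θA hAt (fun x => θA ℓ ≤ x)]
    calc (ℓ : ℕ) + 1 = (Finset.Iic ℓ).card := (Fin.card_Iic ℓ).symm
      _ ≤ _ := by
        apply Finset.card_le_card
        intro i hi
        rw [Finset.mem_filter]
        exact ⟨mem_univ i, hθA (Finset.mem_Iic.1 hi)⟩
  have hcardB : (n + 1) - (ℓ : ℕ) ≤ SB.card := by
    rw [hSB, count_eq hB.eigenvalues θB hBt (fun x => x ≤ θB ℓ)]
    calc (n + 1) - (ℓ : ℕ) = (Finset.Ici ℓ).card := (Fin.card_Ici ℓ).symm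
      _ ≤ _ := by
        apply Finset.card_le_card
        intro i hi
        rw [Finset.mem_filter]
        exact ⟨mem_univ i, hθB (Finset.mem_Ici.1 hi)⟩
  set bA := hA.eigenvectorBasis with hbA
  set bB := hB.eigenvectorBasis with hbB
  set EA : Submodule ℝ (EuclideanSpace ℝ (Fin (n + 1))) :=
    Submodule.span ℝ (⇑bA '' (SA : Set (Fin (n + 1)))) with hEA
  set EB : Submodule ℝ (EuclideanSpace ℝ (Fin (n + 1))) :=
    Submodule.span ℝ (⇑bB '' (SB : Set (Fin (n + 1)))) with hEB
  have hrA : Module.finrank ℝ EA = SA.card := finrank_span_onb bA SA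
  have hrB : Module.finrank ℝ EB = SB.card := finrank_span_onb bB SB
  have hne : EA ⊓ EB ≠ ⊥ := by
    intro hbot
    have h2 := Submodule.finrank_sup_add_finrank_inf_eq EA EB
    rw [hbot, finrank_bot] at h2
    have h3 : Module.finrank ℝ ↥(EA ⊔ EB) ≤ n + 1 := by
      have := Submodule.finrank_le (EA ⊔ EB)
      rwa [finrank_euclideanSpace, Fintype.card_fin] at this
    have hl := ℓ.isLt
    omega
  obtain ⟨v, hvmem, hv0⟩ := Submodule.exists_mem_ne_zero_of_ne_bot hne
  obtain ⟨hvA, hvB⟩ := Submodule.mem_inf.1 hvmem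
  have hsuppA : ∀ j, j ∉ SA → bA.repr v j = 0 := fun j hj => repr_support bA SA v hvA j hj
  have hsuppB : ∀ j, j ∉ SB → bB.repr v j = 0 := fun j hj => repr_support bB SB v hvB j hj
  have hIA : ⟪v, Matrix.toEuclideanLin A v⟫ = ∑ i, hA.eigenvalues i * (bA.repr v i) ^ 2 := by
    rw [inner_repr bA]
    apply Finset.sum_congr rfl
    intro i _
    rw [repr_mulVec hA]; ring
  have hIB : ⟪v, Matrix.toEuclideanLin B v⟫ = ∑ i, hB.eigenvalues i * (bB.repr v i) ^ 2 := by
    rw [inner_repr bB]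
    apply Finset.sum_congr rfl
    intro i _
    rw [repr_mulVec hB]; ring
  have hNA : ‖v‖ ^ 2 = ∑ i, (bA.repr v i) ^ 2 := by
    rw [← real_inner_self_eq_norm_sq, inner_repr bA]
    apply Finset.sum_congr rfl; intro i _; ring
  have hNB : ‖v‖ ^ 2 = ∑ i, (bB.repr v i) ^ 2 := by
    rw [← real_inner_self_eq_norm_sq, inner_repr bB]
    apply Finset.sum_congr rfl; intro i _; ring
  have hlbA : θA ℓ * ‖v‖ ^ 2 ≤ ⟪v, Matrix.toEuclideanLin A v⟫ := by
    rw [hIA, hNA, Finset.mul_sum]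
    apply Finset.sum_le_sum
    intro i _
    by_cases h : bA.repr v i = 0
    · simp [h]
    · have hi : i ∈ SA := by by_contra hns; exact h (hsuppA i hns)
      have := (Finset.mem_filter.1 hi).2
      nlinarith [sq_nonneg (bA.repr v i)]
  have hubB : ⟪v, Matrix.toEuclideanLin B v⟫ ≤ θB ℓ * ‖v‖ ^ 2 := by
    rw [hIB, hNB, Finset.mul_sum]
    apply Finset.sum_le_sum
    intro i _
    by_cases h : bB.repr v i = 0
    · simp [h]
    · have hi : i ∈ SB := by by_contra hns; exact h (hsuppB i hns)
      have := (Finset.mem_filter.1 hi).2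
      nlinarith [sq_nonneg (bB.repr v i)]
  have hsplit : ⟪v, Matrix.toEuclideanLin (A - B) v⟫
      = ⟪v, Matrix.toEuclideanLin A v⟫ - ⟪v, Matrix.toEuclideanLin B v⟫ := by
    rw [map_sub]
    simp [inner_sub_right]
  have hDle : ⟪v, Matrix.toEuclideanLin (A - B) v⟫ ≤ opNorm (A - B) * ‖v‖ ^ 2 :=
    le_of_abs_le (abs_inner_le (A - B) v)
  have hexp : (θA ℓ - θB ℓ) * ‖v‖ ^ 2 = θA ℓ * ‖v‖ ^ 2 - θB ℓ * ‖v‖ ^ 2 := by ring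
  have hDle' : ⟪v, Matrix.toEuclideanLin A v⟫ - ⟪v, Matrix.toEuclideanLin B v⟫
      ≤ θA ℓ * ‖v‖ ^ 2 - θB ℓ * ‖v‖ ^ 2 := by
    rw [← hexp, hcase, ← hsplit]; exact hDle
  have heqA : ⟪v, Matrix.toEuclideanLin A v⟫ = θA ℓ * ‖v‖ ^ 2 := by linarith
  have heqB : ⟪v, Matrix.toEuclideanLin B v⟫ = θB ℓ * ‖v‖ ^ 2 := by linarith
  -- forcing
  have hforceA : ∀ i, hA.eigenvalues i * bA.repr v i = θA ℓ * bA.repr v i := by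
    apply forcing (fun i => bA.repr v i) hA.eigenvalues (θA ℓ)
    · intro i hc
      have hi : i ∈ SA := by by_contra hns; exact hc (hsuppA i hns)
      exact (Finset.mem_filter.1 hi).2
    · rw [← hIA, ← hNA, heqA]
  have hforceB : ∀ i, hB.eigenvalues i * bB.repr v i = θB ℓ * bB.repr v i := by
    have := forcing (fun i => bB.repr v i) (fun i => -hB.eigenvalues i) (-(θB ℓ))
      (fun i hc => by
        have hi : i ∈ SB := by by_contra hns; exact hc (hsuppB i hns)
        have := (Finset.mem_filter.1 hi).2
        show -θB ℓ ≤ -hB.eigenvalues i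
        linarith)
      (by
        have h1 : ∑ i, (fun i => -hB.eigenvalues i) i * (bB.repr v i) ^ 2
            = -(∑ i, hB.eigenvalues i * (bB.repr v i) ^ 2) := by
          rw [← Finset.sum_neg_distrib]; apply Finset.sum_congr rfl; intro i _; ring
        rw [h1, ← hIB, heqB, hNB]
        ring)
    intro i
    have := this i
    simp only at this
    linarith
  have hTA : Matrix.toEuclideanLin A v = θA ℓ • v := by
    apply bA.repr.injective
    apply PiLp.ext
    intro i
    rw [repr_mulVec hA, _root_.map_smul]
    simp only [PiLp.smul_apply, smul_eq_mul]
    exact hforceA i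
  have hTB : Matrix.toEuclideanLin B v = θB ℓ • v := by
    apply bB.repr.injective
    apply PiLp.ext
    intro i
    rw [repr_mulVec hB, _root_.map_smul]
    simp only [PiLp.smul_apply, smul_eq_mul]
    exact hforceB i
  refine ⟨WithLp.equiv 2 _ v, ?_, ?_, ?_⟩
  · intro h
    apply hv0
    apply (WithLp.equiv 2 (Fin (n + 1) → ℝ)).injective
    simpa using h
  · apply toEuclidean_smul_to_mulVec
    simpa using hTA
  · apply toEuclidean_smul_to_mulVec
    simpa using hTB

private lemma opNorm_sub_comm (A B : Matrix (Fin n) (Fin n) ℝ) :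
    opNorm (B - A) = opNorm (A - B) := by
  unfold opNorm
  have : B - A = -(A - B) := (neg_sub A B).symm
  rw [this, map_neg, map_neg, norm_neg]

end Aux

theorem eigenvalue_stability_equality_case
    {m : ℕ} (A B : Matrix (Fin (m + 1)) (Fin (m + 1)) ℝ)
    (hA : A.IsSymm) (hB : B.IsSymm)
    -- `θA ℓ` is the `ℓ`-th largest eigenvalue of `A` (with multiplicity), likewise for
    -- `B` and for `D = A - B`
    (θA θB θD : Fin (m + 1) → ℝ)
    (hθA : Antitone θA) (hθB : Antitone θB) (hθD : Antitone θD)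
    (hAeig : A.charpoly = ∏ ℓ : Fin (m + 1), (X - C (θA ℓ)))
    (hBeig : B.charpoly = ∏ ℓ : Fin (m + 1), (X - C (θB ℓ)))
    (hDeig : (A - B).charpoly = ∏ ℓ : Fin (m + 1), (X - C (θD ℓ)))
    (ℓ : Fin (m + 1))
    (heq : |θA ℓ - θB ℓ| = opNorm (A - B)) :
    ∃ v : Fin (m + 1) → ℝ, v ≠ 0 ∧
      v ∈ (Module.End.eigenspace (Matrix.mulVecLin (A - B)) (θD 0) ⊔
            Module.End.eigenspace (Matrix.mulVecLin (A - B)) (θD (Fin.last m))) ∧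
      A.mulVec v = θA ℓ • v ∧ B.mulVec v = θB ℓ • v := by
  classical
  have hA' : A.IsHermitian := by
    ext i j
    simp only [Matrix.conjTranspose_apply, star_trivial]
    exact congrFun (congrFun hA i) j
  have hB' : B.IsHermitian := by
    ext i j
    simp only [Matrix.conjTranspose_apply, star_trivial]
    exact congrFun (congrFun hB i) j
  have hDt : ∀ t : ℝ, ∏ i, (t - θD i) = (Matrix.diagonal (fun _ => t) - (A - B)).det := by
    intro t
    rw [← eval_charpoly_det, hDeig]
    simp [Polynomial.eval_prod]
  -- θD i is an eigenvalue for each i (used for bounds)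
  have hθDbound : ∀ i, |θD i| ≤ opNorm (A - B) := by
    intro i
    have hroot : ∏ j, (θD i - θD j) = 0 :=
      Finset.prod_eq_zero (mem_univ i) (by ring)
    have hdet : (Matrix.diagonal (fun _ => θD i) - (A - B)).det = 0 := by
      rw [← hDt]; exact hroot
    obtain ⟨w, hw0, hw⟩ := exists_eigvec (A - B) (θD i) hdet
    exact eig_abs_le (A - B) hw0 hw
  rcases le_or_gt (θB ℓ) (θA ℓ) with hord | hord
  · -- θA ℓ ≥ θB ℓ : top eigenspace case
    have hcase : θA ℓ - θB ℓ = opNorm (A - B) := by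
      rw [← heq, abs_of_nonneg (by linarith)]
    obtain ⟨v, hv0, hvA, hvB⟩ := key A B hA' hB' θA θB hθA hθB hAeig hBeig ℓ hcase
    have hvD : (A - B).mulVec v = opNorm (A - B) • v := by
      rw [Matrix.sub_mulVec, hvA, hvB, ← hcase]
      funext i
      simp [Pi.smul_apply]
      ring
    -- opNorm (A-B) is one of the θD
    have hdet : (Matrix.diagonal (fun _ => opNorm (A - B)) - (A - B)).det = 0 := by
      rw [← Matrix.exists_mulVec_eq_zero_iff]
      refine ⟨v, hv0, ?_⟩
      rw [Matrix.sub_mulVec, hvD]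
      funext i
      simp [Matrix.mulVec_diagonal]
    have hprod : ∏ i, (opNorm (A - B) - θD i) = 0 := by rw [hDt]; exact hdet
    obtain ⟨j, _, hj⟩ := Finset.prod_eq_zero_iff.1 hprod
    have hj' : θD j = opNorm (A - B) := by linarith [sub_eq_zero.1 hj]
    have htop : θD 0 = opNorm (A - B) := by
      have h1 : θD 0 ≤ opNorm (A - B) := le_of_abs_le (hθDbound 0)
      have h2 : opNorm (A - B) ≤ θD 0 := hj' ▸ hθD (Fin.zero_le j)
      linarith
    refine ⟨v, hv0, ?_, hvA, hvB⟩
    apply Submodule.mem_sup_left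
    rw [Module.End.mem_eigenspace_iff, Matrix.mulVecLin_apply, hvD, htop]
  · -- θA ℓ < θB ℓ : bottom eigenspace case
    have hcase : θB ℓ - θA ℓ = opNorm (B - A) := by
      rw [opNorm_sub_comm, ← heq, abs_sub_comm, abs_of_nonneg (by linarith)]
    obtain ⟨v, hv0, hvB, hvA⟩ := key B A hB' hA' θB θA hθB hθA hBeig hAeig ℓ hcase
    have hcase' : θA ℓ - θB ℓ = -(opNorm (A - B)) := by
      rw [← opNorm_sub_comm, ← hcase]; ring
    have hvD : (A - B).mulVec v = (-(opNorm (A - B))) • v := by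
      rw [Matrix.sub_mulVec, hvA, hvB, ← hcase']
      funext i
      simp [Pi.smul_apply]
      ring
    have hdet : (Matrix.diagonal (fun _ => -(opNorm (A - B))) - (A - B)).det = 0 := by
      rw [← Matrix.exists_mulVec_eq_zero_iff]
      refine ⟨v, hv0, ?_⟩
      rw [Matrix.sub_mulVec, hvD]
      funext i
      simp [Matrix.mulVec_diagonal]
    have hprod : ∏ i, (-(opNorm (A - B)) - θD i) = 0 := by rw [hDt]; exact hdet
    obtain ⟨j, _, hj⟩ := Finset.prod_eq_zero_iff.1 hprod
    have hj' : θD j = -(opNorm (A - B)) := by linarith [sub_eq_zero.1 hj]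
    have hbot : θD (Fin.last m) = -(opNorm (A - B)) := by
      have h1 : -(opNorm (A - B)) ≤ θD (Fin.last m) := neg_le_of_abs_le (hθDbound (Fin.last m))
      have h2 : θD (Fin.last m) ≤ -(opNorm (A - B)) := hj' ▸ hθD (Fin.le_last j)
      linarith
    refine ⟨v, hv0, ?_, hvA, hvB⟩
    apply Submodule.mem_sup_right
    rw [Module.End.mem_eigenspace_iff, Matrix.mulVecLin_apply, hvD, hbot]
end

section
/- Let i and j be cospectral vertices in a graph G (i.e., φ^{G\i} = φ^{G\j}). Then (φ^{G\i} - Σ_{P:i→j} φ^{G\P})·(φ^{G\i} + Σ_{P:i→j} φ^{G\P}) = φ^G · φ^{G\{i,j}}. -/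
open Polynomial Matrix Finset

/-- Characteristic polynomial (over ℝ) of the adjacency matrix of the induced subgraph of `G`
obtained by deleting the vertices in `S`. -/
noncomputable def phiDel {V : Type*} [Fintype V] [DecidableEq V]
    (G : SimpleGraph V) [DecidableRel G.Adj] (S : Finset V) : Polynomial ℝ :=
  ((G.adjMatrix ℝ).submatrix (Subtype.val : {v // v ∉ S} → V) Subtype.val).charpoly

/-- The sum, over all paths `P` from `i` to `j` in `G`, of the characteristic polynomial of
the graph obtained from `G` by deleting all vertices of `P`. -/
noncomputable def pathSum {V : Type*} [Fintype V] [DecidableEq V]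
    (G : SimpleGraph V) [DecidableRel G.Adj] (i j : V) : Polynomial ℝ :=
  ∑ P : G.Path i j, phiDel G P.1.support.toFinset

section Helpers

variable {n R : Type*} [Fintype n] [DecidableEq n] [CommRing R]

/-- If every row outside `p` is a standard basis vector, the determinant is the determinant
of the principal submatrix on `p`. -/
lemma det_strip (p : n → Prop) [DecidablePred p] (M : Matrix n n R)
    (h : ∀ r, ¬ p r → M r = Pi.single r 1) :
    M.det = (M.submatrix (Subtype.val : {a // p a} → n) Subtype.val).det := by
  rw [← Matrix.det_submatrix_equiv_self (Equiv.sumCompl p) M]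
  have hM : M.submatrix (Equiv.sumCompl p) (Equiv.sumCompl p) =
      Matrix.fromBlocks (M.submatrix Subtype.val Subtype.val)
        (M.submatrix Subtype.val Subtype.val) 0 1 := by
    ext a b
    rcases a with a | a <;> rcases b with b | b <;>
      simp only [Matrix.submatrix_apply, Equiv.sumCompl_apply_inl, Equiv.sumCompl_apply_inr,
        Matrix.fromBlocks_apply₁₁, Matrix.fromBlocks_apply₁₂, Matrix.fromBlocks_apply₂₁,
        Matrix.fromBlocks_apply₂₂, Matrix.zero_apply, Matrix.one_apply]
    · rw [h a.1 a.2, Pi.single_apply, if_neg]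
      intro hba; exact a.2 (hba ▸ b.2)
    · rw [h a.1 a.2, Pi.single_apply]
      by_cases hab : a = b
      · rw [if_pos (by rw [hab]), if_pos hab]
      · rw [if_neg (fun hba => hab (Subtype.ext hba.symm)), if_neg hab]
  rw [hM, Matrix.det_fromBlocks_zero₂₁, Matrix.det_one, mul_one]

lemma det_updateRow_finset_sum (M : Matrix n n R) (i : n) (s : Finset n) (f : n → n → R) :
    (M.updateRow i (∑ k ∈ s, f k)).det = ∑ k ∈ s, (M.updateRow i (f k)).det := by
  classical
  induction s using Finset.induction_on with
  | empty =>
      simp only [Finset.sum_empty]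
      exact Matrix.det_eq_zero_of_row_eq_zero i (fun j => by simp)
  | insert _ _ hk ih =>
      rw [Finset.sum_insert hk, Matrix.det_updateRow_add, ih, Finset.sum_insert hk]

lemma map_det' {S : Type*} [CommRing S] (f : R →+* S) (N : Matrix n n R) :
    f N.det = (N.map f).det := RingHom.map_det f N

end Helpers

section Godsil

variable {V : Type*} [Fintype V] [DecidableEq V] (G : SimpleGraph V) [DecidableRel G.Adj]

/-- The charmatrix of the adjacency matrix, restricted to the complement of `S`. -/
noncomputable def cmS (S : Finset V) : Matrix {v // v ∉ S} {v // v ∉ S} ℝ[X] :=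
  (charmatrix (G.adjMatrix ℝ)).submatrix Subtype.val Subtype.val

/-- Determinant of the restricted charmatrix with a row replaced by a basis vector:
the "cofactor-like" quantity. -/
noncomputable def Dd (S : Finset V) (i j : {v // v ∉ S}) : ℝ[X] :=
  ((cmS G S).updateRow j (Pi.single i 1)).det

/-- Restricted path sum: sum over paths avoiding `S`. -/
noncomputable def pS (S : Finset V) (i j : V) : ℝ[X] :=
  ∑ P : G.Path i j,
    if ∀ v ∈ (P.1 : G.Walk i j).support, v ∉ S
    then phiDel G (S ∪ (P.1 : G.Walk i j).support.toFinset) else 0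

lemma charmatrix_submatrix_val (S : Finset V) :
    charmatrix ((G.adjMatrix ℝ).submatrix (Subtype.val : {v // v ∉ S} → V) Subtype.val)
      = cmS G S := by
  apply Matrix.ext
  intro a b
  by_cases hab : a = b
  · subst hab; simp [cmS, charmatrix_apply_eq]
  · simp only [cmS, Matrix.submatrix_apply]
    rw [charmatrix_apply_ne _ _ _ hab, charmatrix_apply_ne _ _ _ (fun h => hab (Subtype.ext h)),
      Matrix.submatrix_apply]

lemma phiDel_eq (S : Finset V) : phiDel G S = (cmS G S).det := by
  rw [phiDel, Matrix.charpoly, charmatrix_submatrix_val]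

/-- The equiv between the subtype-of-subtype and the subtype for `insert`. -/
def eIns (S : Finset V) (i : V) :
    {w : {v // v ∉ S} // (w : V) ∉ insert i S} ≃ {v // v ∉ insert i S} where
  toFun w := ⟨w.1.1, w.2⟩
  invFun v := ⟨⟨v.1, fun h => v.2 (Finset.mem_insert_of_mem h)⟩, v.2⟩
  left_inv w := rfl
  right_inv v := rfl

lemma Dd_diag (S : Finset V) (j : {v // v ∉ S}) :
    Dd G S j j = phiDel G (insert j.1 S) := by
  rw [phiDel_eq]
  rw [Dd, det_strip (fun w : {v // v ∉ S} => (w : V) ∉ insert j.1 S) _ ?hrows]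
  case hrows =>
    intro r hr
    have hrj : r = j := by
      rcases Finset.mem_insert.mp (not_not.mp hr) with h | h
      · exact Subtype.ext h
      · exact absurd h r.2
    subst hrj
    simp
  have key : ((cmS G S).updateRow j (Pi.single j 1)).submatrix
        (Subtype.val : {w : {v // v ∉ S} // (w : V) ∉ insert j.1 S} → _) Subtype.val
      = (cmS G (insert j.1 S)).submatrix (eIns S j.1) (eIns S j.1) := by
    ext a b
    have ha : a.1 ≠ j := fun h => a.2 (by rw [h]; exact Finset.mem_insert_self _ _)
    simp [Matrix.updateRow_ne ha, cmS, eIns]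
  rw [key, Matrix.det_submatrix_equiv_self]

lemma Dd_rec (S : Finset V) (i j : {v // v ∉ S}) (hij : i ≠ j) :
    Dd G S i j = ∑ k : {v // v ∉ insert i.1 S},
      C (G.adjMatrix ℝ i.1 k.1) *
        Dd G (insert i.1 S) k
          ⟨j.1, by
            simp only [Finset.mem_insert, not_or]
            exact ⟨fun h => hij (Subtype.ext h).symm, j.2⟩⟩ := by
  classical
  have hmem : ∀ k : {v // v ∉ S}, k ≠ i → k.1 ∉ insert i.1 S := fun k hk h =>
    (Finset.mem_insert.mp h).elim (fun h' => hk (Subtype.ext h')) (fun h' => k.2 h')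
  have hj' : j.1 ∉ insert i.1 S := hmem j (Ne.symm hij)
  set N := cmS G S with hN
  set M₁ := N.updateRow j (Pi.single i 1) with hM₁
  have hrow : M₁ i = N i := Matrix.updateRow_ne hij
  have hexp : N i = ∑ k : {v // v ∉ S}, N i k • (Pi.single k 1 : {v // v ∉ S} → ℝ[X]) := by
    funext c
    simp only [Finset.sum_apply, Pi.smul_apply, Pi.single_apply, smul_eq_mul, mul_ite,
      mul_one, mul_zero]
    rw [Finset.sum_ite_eq Finset.univ c (fun k => N i k)]
    simp
  have h1 : M₁.det = ∑ k : {v // v ∉ S}, N i k * (M₁.updateRow i (Pi.single k 1)).det := by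
    conv_lhs => rw [← Matrix.updateRow_eq_self M₁ i, hrow, hexp]
    rw [det_updateRow_finset_sum]
    exact Finset.sum_congr rfl fun k _ => Matrix.det_updateRow_smul M₁ i (N i k) _
  -- the diagonal term vanishes
  have hdiagzero : (M₁.updateRow i (Pi.single i 1)).det = 0 := by
    refine Matrix.det_zero_of_row_eq hij ?_
    rw [Matrix.updateRow_self, Matrix.updateRow_ne (Ne.symm hij), hM₁, Matrix.updateRow_self]
  -- key computation for off-diagonal terms
  have key : ∀ (k : {v // v ∉ S}) (hk : k ≠ i),
      (M₁.updateRow i (Pi.single k 1)).det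
        = - Dd G (insert i.1 S) ⟨k.1, hmem k hk⟩ ⟨j.1, hj'⟩ := by
    intro k hk
    set M₂ := (M₁.updateRow i (Pi.single k 1)).submatrix (Equiv.swap i j) id with hM₂
    have hswap : M₂.det = - (M₁.updateRow i (Pi.single k 1)).det := by
      rw [hM₂, Matrix.det_permute, Equiv.Perm.sign_swap hij]
      simp
    have h' : (M₁.updateRow i (Pi.single k 1)).det = - M₂.det := by
      rw [hswap, neg_neg]
    rw [h']
    · congr 1
      have hM₂i : M₂ i = Pi.single i 1 := by
        funext c
        rw [hM₂, Matrix.submatrix_apply, Equiv.swap_apply_left, id_eq,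
          Matrix.updateRow_ne (Ne.symm hij), hM₁, Matrix.updateRow_self]
      rw [det_strip (fun w : {v // v ∉ S} => (w : V) ∉ insert i.1 S) M₂ ?rows]
      case rows =>
        intro r hr
        have hri : r = i := by
          rcases Finset.mem_insert.mp (not_not.mp hr) with h | h
          · exact Subtype.ext h
          · exact absurd h r.2
        subst hri; exact hM₂i
      have hkey : M₂.submatrix
            (Subtype.val : {w : {v // v ∉ S} // (w : V) ∉ insert i.1 S} → _) Subtype.val
          = ((cmS G (insert i.1 S)).updateRow ⟨j.1, hj'⟩
              (Pi.single ⟨k.1, hmem k hk⟩ 1)).submatrix (eIns S i.1) (eIns S i.1) := by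
        apply Matrix.ext
        intro a b
        have hval : ∀ w : {w : {v // v ∉ S} // (w : V) ∉ insert i.1 S},
            ((eIns S i.1) w : V) = ((w : {v // v ∉ S}) : V) := fun w => rfl
        have hai : (a : {v // v ∉ S}) ≠ i := fun h =>
          a.2 (by rw [congrArg Subtype.val h]; exact Finset.mem_insert_self _ _)
        rw [Matrix.submatrix_apply, Matrix.submatrix_apply, hM₂, Matrix.submatrix_apply, id_eq]
        by_cases haj : (a : {v // v ∉ S}) = j
        · have ha' : eIns S i.1 a = ⟨j.1, hj'⟩ := by
            apply Subtype.ext; rw [hval a, haj]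
          rw [haj, Equiv.swap_apply_right, Matrix.updateRow_self, ha', Matrix.updateRow_self,
            Pi.single_apply, Pi.single_apply]
          by_cases hbk : (b : {v // v ∉ S}) = k
          · rw [if_pos hbk, if_pos (by apply Subtype.ext; rw [hval b, hbk])]
          · rw [if_neg hbk, if_neg (fun h => hbk (by
              apply Subtype.ext
              have hh := congrArg Subtype.val h
              rwa [hval b] at hh))]
        · have ha' : eIns S i.1 a ≠ ⟨j.1, hj'⟩ := fun h => haj (by
            apply Subtype.ext
            have hh := congrArg Subtype.val h
            rwa [hval a] at hh)
          rw [Equiv.swap_apply_of_ne_of_ne hai haj, Matrix.updateRow_ne hai, hM₁,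
            Matrix.updateRow_ne haj, Matrix.updateRow_ne ha', hN]
          rfl
      rw [hkey, Matrix.det_submatrix_equiv_self]
      rfl
  rw [Dd, ← hM₁, h1]
  rw [← Finset.sum_erase_add Finset.univ _ (Finset.mem_univ i), hdiagzero, mul_zero, add_zero]
  refine Finset.sum_bij (fun k hk => (⟨k.1, hmem k (Finset.ne_of_mem_erase hk)⟩ :
      {v // v ∉ insert i.1 S})) (fun k hk => Finset.mem_univ _) ?_ ?_ ?_
  · intro a ha b hb hab
    simp only [Subtype.mk.injEq] at hab
    exact Subtype.ext hab
  · intro b hb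
    have hb1 : b.1 ∉ S := fun h => b.2 (Finset.mem_insert_of_mem h)
    have hbne : (⟨b.1, hb1⟩ : {v // v ∉ S}) ≠ i := by
      intro h
      have hv : (b : V) = i.1 := congrArg Subtype.val h
      exact b.2 (by rw [hv]; exact Finset.mem_insert_self _ _)
    exact ⟨⟨b.1, hb1⟩, Finset.mem_erase.mpr ⟨hbne, Finset.mem_univ _⟩, rfl⟩
  · intro k hk
    have hki : k ≠ i := Finset.ne_of_mem_erase hk
    rw [key k hki]
    have hNik : N i k = - C (G.adjMatrix ℝ i.1 k.1) := by
      rw [hN, cmS, Matrix.submatrix_apply,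
        charmatrix_apply_ne _ _ _ (fun h => hki (Subtype.ext h.symm))]
    rw [hNik]
    ring

lemma pS_diag (S : Finset V) (j : V) (hj : j ∉ S) :
    pS G S j j = phiDel G (insert j S) := by
  rw [pS]
  rw [Finset.sum_eq_single_of_mem SimpleGraph.Path.nil (Finset.mem_univ _)
    (fun b _ hb => absurd (SimpleGraph.Path.loop_eq b) hb)]
  have hu : S ∪ ({j} : Finset V) = insert j S := by
    ext x; simp [or_comm]
  simp [hj, hu]

lemma pS_rec (S : Finset V) (i j : V) (hij : i ≠ j) (hi : i ∉ S) :
    pS G S i j = ∑ k : {v // v ∉ insert i S},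
      C (G.adjMatrix ℝ i k.1) * pS G (insert i S) k.1 j := by
  classical
  have hC : ∀ (k : V), (C (G.adjMatrix ℝ i k) : ℝ[X]) = if G.Adj i k then 1 else 0 := by
    intro k
    rw [SimpleGraph.adjMatrix_apply, apply_ite C, C_1, C_0]
  have hRHS : ∑ k : {v // v ∉ insert i S}, C (G.adjMatrix ℝ i k.1) * pS G (insert i S) k.1 j
      = ∑ q ∈ Finset.univ.filter (fun q : Σ k : {v // v ∉ insert i S}, G.Path k.1 j =>
          G.Adj i q.1.1 ∧ ∀ v ∈ (q.2.1 : G.Walk q.1.1 j).support, v ∉ insert i S),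
          phiDel G (insert i S ∪ (q.2.1 : G.Walk q.1.1 j).support.toFinset) := by
    rw [Finset.sum_filter, ← Finset.univ_sigma_univ, Finset.sum_sigma]
    refine Finset.sum_congr rfl fun k _ => ?_
    rw [pS, Finset.mul_sum, hC k.1]
    refine Finset.sum_congr rfl fun P _ => ?_
    by_cases h1 : G.Adj i k.1 <;>
      by_cases h2 : ∀ v ∈ (P.1 : G.Walk k.1 j).support, v ∉ insert i S <;>
      simp [h1, h2]
  rw [hRHS, pS, ← Finset.sum_filter]
  refine (Finset.sum_bij (fun q hq => (⟨SimpleGraph.Walk.cons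
      ((Finset.mem_filter.mp hq).2.1) q.2.1,
      SimpleGraph.Walk.IsPath.cons q.2.2 (fun hmm =>
        ((Finset.mem_filter.mp hq).2.2 i hmm) (Finset.mem_insert_self i S))⟩ : G.Path i j))
      ?_ ?_ ?_ ?_).symm
  · intro q hq
    refine Finset.mem_filter.mpr ⟨Finset.mem_univ _, fun v hv => ?_⟩
    rcases List.mem_cons.mp (by simpa [SimpleGraph.Walk.support_cons] using hv) with h | h
    · rw [h]; exact hi
    · exact fun hvS => (Finset.mem_filter.mp hq).2.2 v h (Finset.mem_insert_of_mem hvS)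
  · rintro ⟨⟨k1, hk1⟩, ⟨w1, hw1⟩⟩ h1 ⟨⟨k2, hk2⟩, ⟨w2, hw2⟩⟩ h2 hab
    simp only [Subtype.mk.injEq] at hab
    injection hab with h1 h2 h3 h4
    subst h2
    have hw := eq_of_heq h4
    subst hw
    rfl
  · rintro ⟨Pw, hPp⟩ hP
    have hPmem : ∀ v ∈ Pw.support, v ∉ S := (Finset.mem_filter.mp hP).2
    have hnil : ¬ Pw.Nil := SimpleGraph.Walk.not_nil_of_ne hij
    have hcons := Pw.cons_tail_eq hnil
    have hPp' := hPp
    rw [← hcons] at hPp'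
    obtain ⟨htail, hitail⟩ := (SimpleGraph.Walk.cons_isPath_iff _ _).mp hPp'
    have hsupptail : Pw.tail.support = Pw.support.tail :=
      Pw.support_tail_of_not_nil hnil
    rw [hsupptail] at hitail
    have hmemtail : ∀ v ∈ Pw.support.tail, v ∈ Pw.support := fun v hv => by
      rw [← Pw.cons_support_tail hnil, hsupptail]
      exact List.mem_cons_of_mem _ hv
    have hks : Pw.getVert 1 ∈ Pw.support.tail := by
      rw [← hsupptail]
      exact Pw.tail.start_mem_support
    have hkins : Pw.getVert 1 ∉ insert i S := by
      intro hmem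
      rcases Finset.mem_insert.mp hmem with h | h
      · rw [h] at hks
        exact hitail hks
      · exact hPmem _ (hmemtail _ hks) h
    have cond' : ∀ v ∈ Pw.tail.support, v ∉ insert i S := by
      intro v hv hmem
      have hv2 : v ∈ Pw.support.tail := hsupptail ▸ hv
      rcases Finset.mem_insert.mp hmem with h | h
      · rw [h] at hv2
        exact hitail hv2
      · exact hPmem v (hmemtail v hv2) h
    refine ⟨⟨⟨Pw.getVert 1, hkins⟩, ⟨Pw.tail, htail⟩⟩, Finset.mem_filter.mpr
      ⟨Finset.mem_univ _, Pw.adj_snd hnil, cond'⟩, ?_⟩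
    exact Subtype.ext hcons
  · intro q hq
    congr 1
    rw [SimpleGraph.Walk.support_cons, List.toFinset_cons, Finset.union_insert,
      Finset.insert_union]

lemma Dd_eq_pS : ∀ (n : ℕ) (S : Finset V), (Sᶜ : Finset V).card ≤ n →
    ∀ i j : {v // v ∉ S}, Dd G S i j = pS G S i.1 j.1 := by
  intro n
  induction n with
  | zero =>
      intro S hS i j
      exact absurd (Finset.card_eq_zero.mp (Nat.le_zero.mp hS) ▸ Finset.mem_compl.mpr i.2 :
        i.1 ∈ (∅ : Finset V)) (Finset.notMem_empty _)
  | succ n ih =>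
      intro S hS i j
      by_cases hij : i = j
      · subst hij
        rw [Dd_diag, pS_diag G S i.1 i.2]
      · rw [Dd_rec G S i j hij, pS_rec G S i.1 j.1 (fun h => hij (Subtype.ext h)) i.2]
        refine Finset.sum_congr rfl fun k _ => ?_
        have hcard : ((insert i.1 S)ᶜ : Finset V).card ≤ n := by
          rw [Finset.compl_insert, Finset.card_erase_of_mem (Finset.mem_compl.mpr i.2)]
          omega
        rw [ih (insert i.1 S) hcard k _]

/-- The equiv `Fin 2 ≃ {i, j}`. -/
def e2 (i j : V) (hij : i ≠ j) : Fin 2 ≃ {v // v ∈ ({i, j} : Finset V)} where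
  toFun := ![⟨i, by simp⟩, ⟨j, by simp⟩]
  invFun v := if v.1 = i then 0 else 1
  left_inv t := by
    fin_cases t
    · simp
    · simp [Ne.symm hij]
  right_inv v := by
    by_cases h : v.1 = i
    · simp only [h, if_pos]
      exact Subtype.ext h.symm
    · have hv : v.1 = j := by
        rcases Finset.mem_insert.mp v.2 with h' | h'
        · exact absurd h' h
        · exact Finset.mem_singleton.mp h'
      simp only [h, if_neg, if_false]
      exact Subtype.ext hv.symm

@[simp] lemma e2_zero (i j : V) (hij : i ≠ j) : (e2 i j hij) 0 = ⟨i, by simp⟩ := rfl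
@[simp] lemma e2_one (i j : V) (hij : i ≠ j) : (e2 i j hij) 1 = ⟨j, by simp⟩ := rfl

/-- Jacobi / Dodgson identity over a field, for an invertible matrix. -/
lemma jacobi_field {K : Type*} [Field K] (B : Matrix V V K) (hB : IsUnit B.det)
    (i j : V) (hij : i ≠ j) :
    B.det * (B.submatrix (Subtype.val : {v // v ∉ ({i, j} : Finset V)} → V) Subtype.val).det
      = (B.submatrix (Subtype.val : {v // v ∉ ({i} : Finset V)} → V) Subtype.val).det *
        (B.submatrix (Subtype.val : {v // v ∉ ({j} : Finset V)} → V) Subtype.val).det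
        - B.adjugate i j * B.adjugate j i := by
  classical
  have hd0 : B.det ≠ 0 := hB.ne_zero
  have hBB : B * B⁻¹ = 1 := Matrix.mul_nonsing_inv B hB
  set Bi := B⁻¹ with hBi
  have hadj : ∀ a b, B.adjugate a b = B.det * Bi a b := by
    intro a b
    rw [hBi, Matrix.inv_def, Matrix.smul_apply, Ring.inverse_eq_inv, smul_eq_mul,
      ← mul_assoc, mul_inv_cancel₀ hd0, one_mul]
  have hdiag : ∀ a : V, B.adjugate a a
      = (B.submatrix (Subtype.val : {v // v ∉ ({a} : Finset V)} → V) Subtype.val).det := by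
    intro a
    rw [Matrix.adjugate_apply, det_strip (fun v => v ∉ ({a} : Finset V)) _ ?rows]
    case rows =>
      intro r hr
      have hra : r = a := Finset.mem_singleton.mp (not_not.mp hr)
      subst hra
      simp
    congr 1
    apply Matrix.ext
    intro x y
    rw [Matrix.submatrix_apply, Matrix.submatrix_apply,
      Matrix.updateRow_ne (fun h : x.1 = a => x.2 (by rw [h]; simp))]
  set Km := ((1 : Matrix V V K).updateCol i (fun r => Bi r i)).updateCol j
      (fun r => Bi r j) with hKm
  set C2 := (B.updateCol i (Pi.single i 1)).updateCol j (Pi.single j 1) with hC2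
  have hmul : B * Km = C2 := by
    apply Matrix.ext
    intro r c
    rw [Matrix.mul_apply]
    by_cases hcj : c = j
    · rw [hcj]
      calc ∑ s, B r s * Km s j = ∑ s, B r s * Bi s j := by
              refine Finset.sum_congr rfl fun s _ => ?_
              rw [hKm, Matrix.updateCol_self]
        _ = (B * Bi) r j := (Matrix.mul_apply).symm
        _ = (1 : Matrix V V K) r j := by rw [hBB]
        _ = C2 r j := by
              rw [hC2, Matrix.updateCol_self, Matrix.one_apply, Pi.single_apply]
    · by_cases hci : c = i
      · rw [hci]
        calc ∑ s, B r s * Km s i = ∑ s, B r s * Bi s i := by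
                refine Finset.sum_congr rfl fun s _ => ?_
                rw [hKm, Matrix.updateCol_ne hij, Matrix.updateCol_self]
          _ = (B * Bi) r i := (Matrix.mul_apply).symm
          _ = (1 : Matrix V V K) r i := by rw [hBB]
          _ = C2 r i := by
                rw [hC2, Matrix.updateCol_ne hij, Matrix.updateCol_self,
                  Matrix.one_apply, Pi.single_apply]
      · calc ∑ s, B r s * Km s c = ∑ s, B r s * (1 : Matrix V V K) s c := by
                refine Finset.sum_congr rfl fun s _ => ?_
                rw [hKm, Matrix.updateCol_ne hcj, Matrix.updateCol_ne hci]
          _ = (B * (1 : Matrix V V K)) r c := (Matrix.mul_apply).symm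
          _ = B r c := by rw [mul_one]
          _ = C2 r c := by rw [hC2, Matrix.updateCol_ne hcj, Matrix.updateCol_ne hci]
  have h5 : C2.det
      = (B.submatrix (Subtype.val : {v // v ∉ ({i, j} : Finset V)} → V) Subtype.val).det := by
    rw [← Matrix.det_transpose C2, det_strip (fun v => v ∉ ({i, j} : Finset V)) C2ᵀ ?rows]
    case rows =>
      intro r hr
      have hr' : r = i ∨ r = j := by simpa using not_not.mp hr
      funext c
      rcases hr' with h | h <;> subst h
      · rw [Matrix.transpose_apply, hC2, Matrix.updateCol_ne hij, Matrix.updateCol_self]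
      · rw [Matrix.transpose_apply, hC2, Matrix.updateCol_self]
    rw [← Matrix.det_transpose (B.submatrix (Subtype.val : {v // v ∉ ({i, j} : Finset V)} → V)
      Subtype.val)]
    congr 1
    apply Matrix.ext
    intro x y
    have hxj : x.1 ≠ j := fun h => x.2 (by rw [h]; simp)
    have hxi : x.1 ≠ i := fun h => x.2 (by rw [h]; simp)
    rw [Matrix.submatrix_apply, Matrix.transpose_apply, Matrix.transpose_apply,
      Matrix.submatrix_apply, hC2, Matrix.updateCol_ne hxj, Matrix.updateCol_ne hxi]
  have hKii : Km i i = Bi i i := by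
    rw [hKm, Matrix.updateCol_ne hij, Matrix.updateCol_self]
  have hKjj : Km j j = Bi j j := by rw [hKm, Matrix.updateCol_self]
  have hKji : Km j i = Bi j i := by
    rw [hKm, Matrix.updateCol_ne hij, Matrix.updateCol_self]
  have hKij : Km i j = Bi i j := by rw [hKm, Matrix.updateCol_self]
  have h6 : Km.det = Bi i i * Bi j j - Bi i j * Bi j i := by
    rw [← Matrix.det_transpose Km, det_strip (fun v => v ∈ ({i, j} : Finset V)) Kmᵀ ?rows]
    case rows =>
      intro r hr
      have hri : r ≠ i := fun h => hr (by rw [h]; simp)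
      have hrj : r ≠ j := fun h => hr (by rw [h]; simp)
      funext c
      rw [Matrix.transpose_apply, hKm, Matrix.updateCol_ne hrj, Matrix.updateCol_ne hri,
        Matrix.one_apply, Pi.single_apply]
    have hre := Matrix.det_submatrix_equiv_self (e2 i j hij)
      (Kmᵀ.submatrix (Subtype.val : {v // v ∈ ({i, j} : Finset V)} → V) Subtype.val)
    have h2x2 : ((Kmᵀ.submatrix (Subtype.val : {v // v ∈ ({i, j} : Finset V)} → V)
          Subtype.val).submatrix (e2 i j hij) (e2 i j hij)).det
        = Bi i i * Bi j j - Bi i j * Bi j i := by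
      rw [Matrix.det_fin_two]
      simp only [Matrix.submatrix_apply, Matrix.transpose_apply, e2_zero, e2_one]
      rw [hKii, hKjj, hKji, hKij]
      ring
    convert hre.symm.trans h2x2 using 2
  have hdet2 : C2.det = B.det * Km.det := by rw [← hmul, Matrix.det_mul]
  rw [← h5, hdet2, h6, ← hdiag i, ← hdiag j, hadj i i, hadj j j, hadj i j, hadj j i]
  ring

lemma jacobi_poly (i j : V) (hij : i ≠ j) :
    (charmatrix (G.adjMatrix ℝ)).det * (cmS G {i, j}).det
      = (cmS G {i}).det * (cmS G {j}).det
        - (charmatrix (G.adjMatrix ℝ)).adjugate i j *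
          (charmatrix (G.adjMatrix ℝ)).adjugate j i := by
  classical
  set M := charmatrix (G.adjMatrix ℝ) with hM
  have hinj : Function.Injective (algebraMap ℝ[X] (FractionRing ℝ[X])) :=
    IsFractionRing.injective _ _
  have hmon : M.det ≠ 0 := (Matrix.charpoly_monic (G.adjMatrix ℝ)).ne_zero
  have key := jacobi_field (M.map (algebraMap ℝ[X] (FractionRing ℝ[X]))) ?hB i j hij
  case hB =>
    refine isUnit_iff_ne_zero.mpr fun h => hmon (hinj ?_)
    rw [map_zero, map_det']
    exact h
  have hadj : ∀ a b : V, (algebraMap ℝ[X] (FractionRing ℝ[X])) (M.adjugate a b)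
      = (M.map (algebraMap ℝ[X] (FractionRing ℝ[X]))).adjugate a b := fun a b =>
    congrFun (congrFun (RingHom.map_adjugate (algebraMap ℝ[X] (FractionRing ℝ[X])) M) a) b
  apply hinj
  simp only [map_sub, _root_.map_mul, map_det', hadj]
  exact key

lemma pathSum_eq_adjugate (i j : V) :
    pathSum G i j = (charmatrix (G.adjMatrix ℝ)).adjugate i j := by
  classical
  have h0 : ∀ v : V, v ∉ (∅ : Finset V) := fun v => Finset.notMem_empty v
  have h1 : pathSum G i j = pS G ∅ i j := by
    rw [pathSum, pS]
    refine Finset.sum_congr rfl fun P _ => ?_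
    rw [if_pos (fun v _ => h0 v), Finset.empty_union]
  rw [h1, ← Dd_eq_pS G (Finset.univ : Finset V).card ∅
    (by rw [Finset.compl_empty]) ⟨i, h0 i⟩ ⟨j, h0 j⟩, Matrix.adjugate_apply, Dd]
  let e0 : {v // v ∉ (∅ : Finset V)} ≃ V := Equiv.subtypeUnivEquiv h0
  have hre := Matrix.det_submatrix_equiv_self e0
    ((charmatrix (G.adjMatrix ℝ)).updateRow j (Pi.single i 1))
  rw [← hre]
  congr 1
  apply Matrix.ext
  intro a b
  have hb : e0 b = b.1 := rfl
  by_cases haj : a.1 = j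
  · have ha : a = ⟨j, h0 j⟩ := Subtype.ext haj
    rw [ha, Matrix.updateRow_self, Matrix.submatrix_apply]
    have : e0 ⟨j, h0 j⟩ = j := rfl
    rw [this, Matrix.updateRow_self, Pi.single_apply, Pi.single_apply]
    by_cases hbi : b = ⟨i, h0 i⟩
    · rw [if_pos hbi, if_pos (by rw [hbi]; rfl)]
    · rw [if_neg hbi, if_neg (fun h : (e0 b) = i => hbi (Subtype.ext (by rw [← hb, h])))]
  · have ha : a ≠ ⟨j, h0 j⟩ := fun h => haj (congrArg Subtype.val h)
    rw [Matrix.updateRow_ne ha, Matrix.submatrix_apply,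
      Matrix.updateRow_ne (fun h : (e0 a) = j => haj h)]
    rfl

end Godsil

theorem cospectral_factorization {V : Type*} [Fintype V] [DecidableEq V]
    (G : SimpleGraph V) [DecidableRel G.Adj] (i j : V) (hij : i ≠ j)
    (hcospec : phiDel G {i} = phiDel G {j}) :
    (phiDel G {i} - pathSum G i j) * (phiDel G {i} + pathSum G i j) =
      phiDel G ∅ * phiDel G {i, j} := by
  classical
  set M := charmatrix (G.adjMatrix ℝ) with hMdef
  have hMsymm : Mᵀ = M := by
    apply Matrix.ext
    intro a b
    by_cases hab : a = b
    · rw [hab, Matrix.transpose_apply]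
    · rw [Matrix.transpose_apply, hMdef, charmatrix_apply_ne _ _ _ (fun h => hab h.symm),
        charmatrix_apply_ne _ _ _ hab]
      have : G.adjMatrix ℝ b a = G.adjMatrix ℝ a b := by
        simp [SimpleGraph.adjMatrix_apply, G.adj_comm]
      rw [this]
  have hadjsymm : M.adjugate j i = M.adjugate i j := by
    calc M.adjugate j i = (M.adjugate)ᵀ i j := rfl
      _ = (Mᵀ).adjugate i j := by rw [Matrix.adjugate_transpose]
      _ = M.adjugate i j := by rw [hMsymm]
  have h0 : ∀ v : V, v ∉ (∅ : Finset V) := fun v => Finset.notMem_empty v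
  have hphi0 : phiDel G ∅ = M.det := by
    rw [phiDel_eq, cmS, ← Matrix.det_submatrix_equiv_self (Equiv.subtypeUnivEquiv h0) M]
    rfl
  have hps : pathSum G i j = M.adjugate i j := pathSum_eq_adjugate G i j
  have key : phiDel G {i} * phiDel G {i} = phiDel G {i} * phiDel G {j} := by
    nth_rewrite 2 [hcospec]
    rfl
  have main : phiDel G {i} * phiDel G {j} - M.adjugate i j * M.adjugate i j
      = phiDel G ∅ * phiDel G {i, j} := by
    rw [phiDel_eq G {i}, phiDel_eq G {j}, hphi0, phiDel_eq G {i, j}]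
    nth_rewrite 2 [← hadjsymm]
    linear_combination - jacobi_poly G i j hij
  calc (phiDel G {i} - pathSum G i j) * (phiDel G {i} + pathSum G i j)
      = phiDel G {i} * phiDel G {i} - pathSum G i j * pathSum G i j := by ring
    _ = phiDel G {i} * phiDel G {j} - M.adjugate i j * M.adjugate i j := by
        rw [key, hps]
    _ = phiDel G ∅ * phiDel G {i, j} := main
end

section
/- For vertices i and j of a graph G with adjacency matrix spectral decomposition A = Σ_θ θ E_θ, the rational function (Σ_{P:i→j} φ^{G\P})(t)/φ^G(t) equals Σ_θ (E_θ)_{i,j}/(t - θ), where the sum in the numerator is over all paths from i to j. -/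
open Polynomial Matrix Finset

section Schur
variable {n : Type*} [Fintype n] [DecidableEq n] {K : Type*} [Field K]

private lemma sum_split (i : n) (f : n → K) :
    ∑ k, f k = f i + ∑ k : {k // ¬ k = i}, f k.1 := by
  rw [← Finset.add_sum_erase univ f (mem_univ i)]
  congr 1
  exact Finset.sum_subtype (univ.erase i) (fun x => by simp) f

variable (M : Matrix n n K) (i : n)

private theorem schur_core (hM : IsUnit M.det)
    (hN : IsUnit (M.submatrix (Subtype.val : {k // ¬ k = i} → n) Subtype.val).det) (j : n) :
    M⁻¹ i j * (M i i - ∑ k : {k // ¬ k = i}, M i k.1 *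
      ((M.submatrix (Subtype.val : {k // ¬ k = i} → n) Subtype.val)⁻¹ *ᵥ
        (fun k : {k // ¬ k = i} => M k.1 i)) k)
    = (if i = j then 1 else 0)
      - ∑ k : {k // ¬ k = i}, M i k.1 *
        ((M.submatrix (Subtype.val : {k // ¬ k = i} → n) Subtype.val)⁻¹ *ᵥ
          (fun r : {k // ¬ k = i} => if r.1 = j then (1:K) else 0)) k := by
  set N := M.submatrix (Subtype.val : {k // ¬ k = i} → n) Subtype.val with hNdef
  set x : K := M⁻¹ i j with hx
  set v : {k // ¬ k = i} → K := fun k => M⁻¹ k.1 j with hvdef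
  have hrow : ∀ r, ∑ k, M r k * M⁻¹ k j = if r = j then 1 else 0 := by
    intro r
    have h1 := Matrix.mul_nonsing_inv M hM
    have h2 := congrFun (congrFun h1 r) j
    rwa [Matrix.mul_apply, Matrix.one_apply] at h2
  have hNv : N *ᵥ v = fun r : {k // ¬ k = i} =>
      (if r.1 = j then 1 else 0) - M r.1 i * x := by
    funext r
    have h3 := hrow r.1
    rw [sum_split i (fun k => M r.1 k * M⁻¹ k j)] at h3
    simp only [Matrix.mulVec, dotProduct, hNdef, Matrix.submatrix_apply, hvdef]
    linear_combination h3
  have hv : v = N⁻¹ *ᵥ (fun r : {k // ¬ k = i} =>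
      (if r.1 = j then 1 else 0) - M r.1 i * x) := by
    rw [← hNv, Matrix.mulVec_mulVec, Matrix.nonsing_inv_mul N hN, Matrix.one_mulVec]
  have hvk : ∀ k, v k = (N⁻¹ *ᵥ (fun r : {k // ¬ k = i} => if r.1 = j then (1:K) else 0)) k
      - x * (N⁻¹ *ᵥ fun r : {k // ¬ k = i} => M r.1 i) k := by
    intro k
    rw [hv]
    simp only [Matrix.mulVec, dotProduct]
    rw [Finset.mul_sum, ← Finset.sum_sub_distrib]
    apply Finset.sum_congr rfl
    intro r _
    ring
  have hi := hrow i
  rw [sum_split i (fun k => M i k * M⁻¹ k j)] at hi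
  have hsum : ∑ k : {k // ¬ k = i}, M i k.1 * v k
      = ∑ k : {k // ¬ k = i}, M i k.1 *
          (N⁻¹ *ᵥ (fun r : {k // ¬ k = i} => if r.1 = j then (1:K) else 0)) k
        - x * ∑ k : {k // ¬ k = i}, M i k.1 *
          (N⁻¹ *ᵥ fun r : {k // ¬ k = i} => M r.1 i) k := by
    rw [Finset.mul_sum, ← Finset.sum_sub_distrib]
    apply Finset.sum_congr rfl
    intro k _
    rw [hvk k]
    ring
  rw [hsum] at hi
  linear_combination hi

private theorem schur_diag (hM : IsUnit M.det)
    (hN : IsUnit (M.submatrix (Subtype.val : {k // ¬ k = i} → n) Subtype.val).det) :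
    M⁻¹ i i * (M i i - ∑ k : {k // ¬ k = i}, M i k.1 *
      ((M.submatrix (Subtype.val : {k // ¬ k = i} → n) Subtype.val)⁻¹ *ᵥ
        (fun k : {k // ¬ k = i} => M k.1 i)) k) = 1 := by
  have h := schur_core M i hM hN i
  have h0 : (fun r : {k // ¬ k = i} => if r.1 = i then (1:K) else 0) = 0 := by
    funext r
    simp [r.2]
  rw [h0, Matrix.mulVec_zero] at h
  simpa using h

section DetSplit

private theorem det_split (hN : IsUnit (M.submatrix (Subtype.val : {k // ¬ k = i} → n) Subtype.val).det) :
    M.det = (M.submatrix (Subtype.val : {k // ¬ k = i} → n) Subtype.val).det *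
      (M i i - ∑ k : {k // ¬ k = i}, M i k.1 *
        ((M.submatrix (Subtype.val : {k // ¬ k = i} → n) Subtype.val)⁻¹ *ᵥ
          (fun k : {k // ¬ k = i} => M k.1 i)) k) := by
  classical
  set N := M.submatrix (Subtype.val : {k // ¬ k = i} → n) Subtype.val with hNdef
  set e := Equiv.sumCompl (fun k : n => k = i) with he
  set Q := M.submatrix e e with hQ
  have hQN : Q.toBlocks₂₂ = N := by
    ext a b
    simp [hQ, Matrix.toBlocks₂₂, hNdef, he]
  haveI : Invertible Q.toBlocks₂₂ := by
    rw [hQN]; exact Matrix.invertibleOfIsUnitDet N hN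
  have hdet : M.det = Q.det := (Matrix.det_submatrix_equiv_self e M).symm
  haveI : Unique {k // k = i} := ⟨⟨⟨i, rfl⟩⟩, fun a => Subtype.ext a.2⟩
  rw [hdet, ← Matrix.fromBlocks_toBlocks Q, Matrix.det_fromBlocks₂₂]
  congr 1
  · refine (Matrix.det_unique _).trans ?_
    have hd : (default : {k // k = i}).1 = i := (default : {k // k = i}).2
    rw [invOf_eq_nonsing_inv, hQN]
    simp only [Matrix.sub_apply]
    congr 1
    · simp [hQ, Matrix.toBlocks₁₁, hd, he]
    · simp only [Matrix.mul_apply, Matrix.toBlocks₁₂, Matrix.toBlocks₂₁, Matrix.of_apply, hQ,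
        Matrix.submatrix_apply, Matrix.mulVec, dotProduct, he,
        Equiv.sumCompl_apply_inl, Equiv.sumCompl_apply_inr, hd, Finset.sum_mul,
        Finset.mul_sum]
      rw [Finset.sum_comm]
      apply Finset.sum_congr rfl
      intro k _
      apply Finset.sum_congr rfl
      intro l _
      ring
end DetSplit

private theorem schur_inv_diag (hM : IsUnit M.det)
    (hN : IsUnit (M.submatrix (Subtype.val : {k // ¬ k = i} → n) Subtype.val).det) :
    M⁻¹ i i * M.det = (M.submatrix (Subtype.val : {k // ¬ k = i} → n) Subtype.val).det := by
  have h1 := schur_diag M i hM hN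
  have h2 := det_split M i hN
  rw [h2]
  linear_combination (M.submatrix (Subtype.val : {k // ¬ k = i} → n) Subtype.val).det * h1

private theorem schur_inv_offdiag (hM : IsUnit M.det)
    (hN : IsUnit (M.submatrix (Subtype.val : {k // ¬ k = i} → n) Subtype.val).det)
    (j : n) (hj : ¬ j = i) :
    M⁻¹ i j = M⁻¹ i i * ∑ l : {k // ¬ k = i},
      (-(M i l.1)) * (M.submatrix (Subtype.val : {k // ¬ k = i} → n) Subtype.val)⁻¹ l
        (⟨j, hj⟩ : {k // ¬ k = i}) := by
  have h1 := schur_core M i hM hN j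
  have h2 := schur_diag M i hM hN
  have h3 : ∀ k : {k // ¬ k = i},
      ((M.submatrix (Subtype.val : {k // ¬ k = i} → n) Subtype.val)⁻¹ *ᵥ
        (fun r : {k // ¬ k = i} => if r.1 = j then (1:K) else 0)) k
      = (M.submatrix (Subtype.val : {k // ¬ k = i} → n) Subtype.val)⁻¹ k (⟨j, hj⟩ : {k // ¬ k = i}) := by
    intro k
    simp only [Matrix.mulVec, dotProduct, mul_ite, mul_one, mul_zero]
    have hcond : ∀ r : {k // ¬ k = i}, (r.1 = j) = (r = (⟨j, hj⟩ : {k // ¬ k = i})) := by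
      intro r
      apply propext
      exact ⟨fun h => Subtype.ext h, fun h => congrArg Subtype.val h⟩
    simp only [hcond]
    rw [Finset.sum_ite_eq' univ (⟨j, hj⟩ : {k // ¬ k = i})]
    simp
  rw [if_neg (fun h : i = j => hj h.symm)] at h1
  simp only [h3] at h1
  simp only [neg_mul]
  rw [Finset.sum_neg_distrib]
  linear_combination M⁻¹ i i * h1 - M⁻¹ i j * h2
end Schur

section DelG
variable {V : Type*}

def delG (G : SimpleGraph V) (i : V) : SimpleGraph {v // ¬ v = i} :=
  G.comap Subtype.val

instance (G : SimpleGraph V) [DecidableRel G.Adj] (i : V) :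
    DecidableRel (delG G i).Adj :=
  fun a b => inferInstanceAs (Decidable (G.Adj a.1 b.1))

def delHom (G : SimpleGraph V) (i : V) : delG G i →g G :=
  ⟨Subtype.val, fun h => h⟩

lemma delHom_coe (G : SimpleGraph V) (i : V) :
    ⇑(delHom G i) = (Subtype.val : {v // ¬ v = i} → V) := rfl

lemma delHom_inj (G : SimpleGraph V) (i : V) :
    Function.Injective (delHom G i) := by
  rw [delHom_coe]; exact Subtype.val_injective

lemma adj_delG [Fintype V] [DecidableEq V] (G : SimpleGraph V) [DecidableRel G.Adj] (i : V) :
    (delG G i).adjMatrix ℝ = (G.adjMatrix ℝ).submatrix Subtype.val Subtype.val := by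
  ext a b
  by_cases h : G.Adj a.1 b.1 <;>
    (rw [SimpleGraph.adjMatrix_apply, Matrix.submatrix_apply, SimpleGraph.adjMatrix_apply]
     simp [delG, SimpleGraph.comap_adj, h])

def liftWalk {G : SimpleGraph V} {i : V} :
    ∀ {a b : V} (p : G.Walk a b) (ha : ¬ a = i) (hb : ¬ b = i),
      (∀ v ∈ p.support, ¬ v = i) → (delG G i).Walk ⟨a, ha⟩ ⟨b, hb⟩
  | _, _, SimpleGraph.Walk.nil, _, _, _ => SimpleGraph.Walk.nil
  | a, b, @SimpleGraph.Walk.cons _ _ _ c _ h q, ha, hb, hp =>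
      SimpleGraph.Walk.cons
        (show (delG G i).Adj ⟨a, ha⟩ ⟨c, hp c (by
          rw [SimpleGraph.Walk.support_cons]
          exact List.mem_cons_of_mem _ q.start_mem_support)⟩ from h)
        (liftWalk q _ hb (fun v hv => hp v (by
          rw [SimpleGraph.Walk.support_cons]
          exact List.mem_cons_of_mem _ hv)))

lemma liftWalk_map {G : SimpleGraph V} {i : V} :
    ∀ {a b : V} (p : G.Walk a b) (ha : ¬ a = i) (hb : ¬ b = i)
      (hp : ∀ v ∈ p.support, ¬ v = i),
      (liftWalk p ha hb hp).map (delHom G i) = p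
  | _, _, SimpleGraph.Walk.nil, _, _, _ => by simp [liftWalk]; rfl
  | a, b, @SimpleGraph.Walk.cons _ _ _ c _ h q, ha, hb, hp => by
      rw [liftWalk, SimpleGraph.Walk.map_cons, liftWalk_map]
      rfl

lemma liftWalk_isPath {G : SimpleGraph V} {i : V} {a b : V} (p : G.Walk a b)
    (ha : ¬ a = i) (hb : ¬ b = i) (hp : ∀ v ∈ p.support, ¬ v = i)
    (hpath : p.IsPath) : (liftWalk p ha hb hp).IsPath := by
  apply SimpleGraph.Walk.IsPath.of_map (f := delHom G i)
  rw [liftWalk_map]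
  exact hpath

end DelG

section PhiDel
variable {V : Type*} [Fintype V] [DecidableEq V]

lemma list_toFinset_map {α β : Type*} [DecidableEq α] [DecidableEq β]
    (f : α → β) (l : List α) : (l.map f).toFinset = l.toFinset.image f := by
  ext x
  simp [List.mem_toFinset, Finset.mem_image, List.mem_map]

lemma phiDel_empty (G : SimpleGraph V) [DecidableRel G.Adj] :
    phiDel G ∅ = (G.adjMatrix ℝ).charpoly := by
  unfold phiDel
  rw [← Matrix.charpoly_reindex (Equiv.subtypeUnivEquiv
    (fun v => Finset.notMem_empty v))]
  congr 1

def delEquiv (i : V) (S' : Finset {v // ¬ v = i}) :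
    {w : {v // ¬ v = i} // w ∉ S'} ≃ {v : V // v ∉ insert i (S'.image Subtype.val)} where
  toFun w := ⟨w.1.1, by
    simp only [Finset.mem_insert, Finset.mem_image, not_or, not_exists, not_and]
    refine ⟨w.1.2, fun x hx hvx => w.2 ?_⟩
    have hxw : x = w.1 := Subtype.ext hvx
    rwa [hxw] at hx⟩
  invFun v := ⟨⟨v.1, fun h => v.2 (by rw [h]; exact Finset.mem_insert_self _ _)⟩,
    fun hmem => v.2 (Finset.mem_insert_of_mem (Finset.mem_image_of_mem Subtype.val hmem))⟩
  left_inv w := by apply Subtype.ext; apply Subtype.ext; rfl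
  right_inv v := by apply Subtype.ext; rfl

lemma phiDel_delG (G : SimpleGraph V) [DecidableRel G.Adj] (i : V)
    (S' : Finset {v // ¬ v = i}) :
    phiDel (delG G i) S' = phiDel G (insert i (S'.image Subtype.val)) := by
  unfold phiDel
  rw [adj_delG]
  rw [← Matrix.charpoly_reindex (delEquiv i S')]
  congr 1

lemma pathSum_self (G : SimpleGraph V) [DecidableRel G.Adj] (i : V) :
    pathSum G i i = phiDel G {i} := by
  unfold pathSum
  haveI : Unique (G.Path i i) := ⟨⟨SimpleGraph.Path.nil⟩, fun p => p.loop_eq⟩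
  rw [Fintype.sum_unique]
  have hdef : (default : G.Path i i) = SimpleGraph.Path.nil := SimpleGraph.Path.loop_eq _
  rw [hdef]
  congr 1

end PhiDel

section PathRec
variable {V : Type*} [Fintype V] [DecidableEq V]

lemma consPath_isPath {G : SimpleGraph V} [DecidableRel G.Adj] {i j : V} (hj : ¬ j = i)
    (k : {v // ¬ v = i}) (hadj : G.Adj i k.1) (P : (delG G i).Path k (⟨j, hj⟩ : {k // ¬ k = i})) :
    (SimpleGraph.Walk.cons hadj (P.1.map (delHom G i))).IsPath := by
  erw [SimpleGraph.Walk.cons_isPath_iff]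
  constructor
  · exact SimpleGraph.Walk.map_isPath_of_injective (delHom_inj G i) P.2
  · erw [SimpleGraph.Walk.support_map]
    intro hmem
    obtain ⟨w, _, hw⟩ := List.mem_map.mp hmem
    exact w.2 hw

lemma pathSum_rec (G : SimpleGraph V) [DecidableRel G.Adj] (i j : V) (hj : ¬ j = i) :
    pathSum G i j = ∑ k : {v // ¬ v = i},
      C ((G.adjMatrix ℝ) i k.1) * pathSum (delG G i) k (⟨j, hj⟩ : {k // ¬ k = i}) := by
  classical
  unfold pathSum
  have hC : ∀ (k : {v // ¬ v = i}), C ((G.adjMatrix ℝ) i k.1)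
      = if G.Adj i k.1 then (1:ℝ[X]) else 0 := by
    intro k; by_cases h : G.Adj i k.1 <;> simp [h]
  have step1 : ∑ k : {v // ¬ v = i},
        C ((G.adjMatrix ℝ) i k.1) *
          ∑ P' : (delG G i).Path k (⟨j, hj⟩ : {k // ¬ k = i}), phiDel (delG G i) P'.1.support.toFinset
      = ∑ x ∈ ((univ : Finset {v // ¬ v = i}).sigma
            (fun k => (univ : Finset ((delG G i).Path k (⟨j, hj⟩ : {k // ¬ k = i}))))).filter
            (fun x => G.Adj i x.1.1),
          phiDel (delG G i) x.2.1.support.toFinset := by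
    rw [Finset.sum_filter, Finset.sum_sigma]
    apply Finset.sum_congr rfl
    intro k _
    rw [hC k, Finset.mul_sum]
    apply Finset.sum_congr rfl
    intro P' _
    rw [ite_mul, one_mul, zero_mul]
  rw [step1]
  symm
  -- now a bijection between the filtered sigma set and all paths i → j
  refine Finset.sum_bij
    (fun x hx => (⟨SimpleGraph.Walk.cons
        (show G.Adj i x.1.1 from (Finset.mem_filter.mp hx).2)
        (x.2.1.map (delHom G i)),
        consPath_isPath hj x.1 (Finset.mem_filter.mp hx).2 x.2⟩ : G.Path i j))
    ?_ ?_ ?_ ?_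
  · intro a ha; exact Finset.mem_univ _
  · -- injectivity
    intro x1 h1 x2 h2 heq
    obtain ⟨k1, P1⟩ := x1
    obtain ⟨k2, P2⟩ := x2
    have hw : SimpleGraph.Walk.cons _ (P1.1.map (delHom G i))
        = SimpleGraph.Walk.cons _ (P2.1.map (delHom G i)) := congrArg Subtype.val heq
    have hk : k1 = k2 := by
      have hs := congrArg SimpleGraph.Walk.support hw
      erw [SimpleGraph.Walk.support_cons, SimpleGraph.Walk.support_cons,
        SimpleGraph.Walk.support_map, SimpleGraph.Walk.support_map,
        SimpleGraph.Walk.support_eq_cons P1.1, SimpleGraph.Walk.support_eq_cons P2.1] at hs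
      simp only [List.map_cons, List.cons.injEq] at hs
      exact Subtype.ext hs.2.1
    subst hk
    replace hw := eq_of_heq (SimpleGraph.Walk.cons.inj hw).2
    have : P1 = P2 := by
      apply SimpleGraph.Path.map_injective (delHom_inj G i)
      exact Subtype.ext hw
    rw [this]
  · -- surjectivity
    intro b hb
    obtain ⟨w, hw⟩ := b
    cases w with
    | nil => exact absurd rfl hj
    | cons h q =>
      rename_i c
      rw [SimpleGraph.Walk.cons_isPath_iff] at hw
      have hc : ¬ c = i := fun hci => hw.2 (hci ▸ q.start_mem_support)
      have hq : ∀ v ∈ q.support, ¬ v = i := fun v hv hvi => hw.2 (hvi ▸ hv)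
      refine ⟨⟨⟨c, hc⟩, ⟨liftWalk q hc hj hq, liftWalk_isPath q hc hj hq hw.1⟩⟩, ?_, ?_⟩
      · rw [Finset.mem_filter]
        exact ⟨Finset.mem_sigma.mpr ⟨Finset.mem_univ _, Finset.mem_univ _⟩, h⟩
      · apply Subtype.ext
        show SimpleGraph.Walk.cons _ ((liftWalk q hc hj hq).map (delHom G i)) = _
        rw [liftWalk_map]
        rfl
  · -- values agree
    intro x hx
    show phiDel (delG G i) x.2.1.support.toFinset = phiDel G _
    rw [phiDel_delG]
    congr 1
    show insert i (x.2.1.support.toFinset.image Subtype.val)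
      = (SimpleGraph.Walk.cons _ (x.2.1.map (delHom G i))).support.toFinset
    erw [SimpleGraph.Walk.support_cons, SimpleGraph.Walk.support_map, List.toFinset_cons,
      list_toFinset_map]
    rfl

end PathRec

section CharSub
variable {R : Type*} [CommRing R]

lemma charmatrix_submatrix_inj {m n : Type*} [DecidableEq m] [DecidableEq n]
    [Fintype m] [Fintype n] (A : Matrix n n R) (f : m → n) (hf : Function.Injective f) :
    (charmatrix A).submatrix f f = charmatrix (A.submatrix f f) := by
  ext a b
  simp only [Matrix.submatrix_apply, charmatrix_apply, Matrix.diagonal_apply,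
    Matrix.sub_apply]
  have hiff : (if f a = f b then (X:R[X]) else 0) = (if a = b then X else 0) :=
    if_congr ⟨fun h => hf h, fun h => congrArg f h⟩ rfl rfl
  rw [hiff]

end CharSub

universe u

theorem key_aux : ∀ (N : ℕ) {V : Type u} [Fintype V] [DecidableEq V]
    (G : SimpleGraph V) [DecidableRel G.Adj], Fintype.card V ≤ N → ∀ i j : V,
    (charmatrix (G.adjMatrix ℝ)).adjugate i j = pathSum G i j := by
  intro N
  induction N with
  | zero =>
    intro V _ _ G _ hcard i j
    exact absurd (lt_of_lt_of_le (Fintype.card_pos_iff.mpr ⟨i⟩) hcard) (lt_irrefl 0)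
  | succ n ih =>
    intro V _ _ G _ hcard i j
    classical
    set F := FractionRing (Polynomial ℝ) with hF
    have hinj : Function.Injective (algebraMap ℝ[X] F) := IsFractionRing.injective ℝ[X] F
    set φm : ℝ[X] →+* F := (algebraMap ℝ[X] F : ℝ[X] →+* F) with hφ
    set A := G.adjMatrix ℝ with hA
    set χ := charmatrix A with hχ
    set Mm : Matrix V V F := χ.map φm with hMm
    have hdetM : Mm.det = φm A.charpoly := by
      rw [Matrix.charpoly, RingHom.map_det, RingHom.mapMatrix_apply, hMm, hχ]
    have hdetM0 : Mm.det ≠ 0 := by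
      rw [hdetM]
      intro h
      exact (Matrix.charpoly_monic A).ne_zero (hinj (h.trans (map_zero φm).symm))
    have hMu : IsUnit Mm.det := isUnit_iff_ne_zero.mpr hdetM0
    set A' := (delG G i).adjMatrix ℝ with hA'
    set Nn : Matrix {v // ¬ v = i} {v // ¬ v = i} F :=
      Mm.submatrix Subtype.val Subtype.val with hNn
    have hNc : Nn = (charmatrix A').map φm := by
      rw [hNn, hMm, Matrix.submatrix_map,
        charmatrix_submatrix_inj A Subtype.val Subtype.val_injective, hA', adj_delG]
    have hdetN : Nn.det = φm A'.charpoly := by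
      rw [hNc, Matrix.charpoly, RingHom.map_det, RingHom.mapMatrix_apply]
    have hdetN0 : Nn.det ≠ 0 := by
      rw [hdetN]
      intro h
      exact (Matrix.charpoly_monic A').ne_zero (hinj (h.trans (map_zero φm).symm))
    have hNu : IsUnit Nn.det := isUnit_iff_ne_zero.mpr hdetN0
    have hcard' : Fintype.card {v // ¬ v = i} ≤ n := by
      have h1 : Fintype.card {v // ¬ v = i} = Fintype.card V - Fintype.card {v // v = i} :=
        Fintype.card_subtype_compl _
      have h2 : Fintype.card {v // v = i} = 1 := Fintype.card_subtype_eq i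
      omega
    have hadjM : ∀ a b, Mm.adjugate a b = φm (χ.adjugate a b) := by
      intro a b
      have h := congrFun (congrFun (RingHom.map_adjugate φm χ) a) b
      simp only [RingHom.mapMatrix_apply, Matrix.map_apply] at h
      rw [hMm]
      exact h.symm
    have hinvdiag : Mm⁻¹ i i * Mm.det = Nn.det := schur_inv_diag Mm i hMu hNu
    have h3 : ∀ a b, Mm⁻¹ a b = (Mm.det)⁻¹ * Mm.adjugate a b := by
      intro a b
      rw [Matrix.inv_def]
      simp [Matrix.smul_apply, Ring.inverse_eq_inv, smul_eq_mul]
      exact Or.inl (Ring.inverse_eq_inv (G₀ := F) _)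
    have hadj_diag : Mm.adjugate i i = Nn.det := by
      rw [h3 i i] at hinvdiag
      rw [mul_assoc, mul_comm, mul_assoc, mul_inv_cancel₀ hdetM0, mul_one] at hinvdiag
      exact hinvdiag
    have hphiA' : A'.charpoly = pathSum G i i := by
      rw [pathSum_self G i, ← phiDel_empty (delG G i), phiDel_delG G i ∅, Finset.image_empty,
        Finset.insert_empty]
    by_cases hij : i = j
    · subst hij
      apply hinj
      calc φm (χ.adjugate i i) = Mm.adjugate i i := (hadjM i i).symm
        _ = Nn.det := hadj_diag
        _ = φm A'.charpoly := hdetN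
        _ = φm (pathSum G i i) := by rw [hphiA']
    · have hji : ¬ j = i := fun h => hij h.symm
      have hadjN : ∀ (a b : {v // ¬ v = i}),
          Nn.adjugate a b = φm ((charmatrix A').adjugate a b) := by
        intro a b
        have h := congrFun (congrFun (RingHom.map_adjugate φm (charmatrix A')) a) b
        simp only [RingHom.mapMatrix_apply, Matrix.map_apply] at h
        rw [hNc]
        exact h.symm
      have hNinv : ∀ (a b : {v // ¬ v = i}),
          Nn⁻¹ a b = (Nn.det)⁻¹ * φm (pathSum (delG G i) a b) := by
        intro a b
        rw [Matrix.inv_def]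
        simp only [Matrix.smul_apply, Ring.inverse_eq_inv, smul_eq_mul]
        rw [hadjN a b, ih (delG G i) hcard' a b]
        exact congrArg (· * φm (pathSum (delG G i) a b)) (Ring.inverse_eq_inv (G₀ := F) _)
      have hoff := schur_inv_offdiag Mm i hMu hNu j hji
      have hMik : ∀ (k : {v // ¬ v = i}), -(Mm i k.1) = φm (C (A i k.1)) := by
        intro k
        have hik : i ≠ k.1 := fun h => k.2 h.symm
        show -(φm (χ i k.1)) = _
        rw [hχ, charmatrix_apply_ne _ _ _ hik, map_neg, neg_neg]
      have hadj_off : Mm.adjugate i j = Mm⁻¹ i j * Mm.det := by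
        rw [h3 i j]
        rw [mul_assoc, mul_comm, mul_assoc, mul_inv_cancel₀ (G₀ := F) hdetM0, mul_one]
      apply hinj
      have hterm : ∀ k : {v // ¬ v = i},
          (-(Mm i k.1)) * Nn⁻¹ k ⟨j, hji⟩
            = φm (C (A i k.1)) * ((Nn.det)⁻¹ * φm (pathSum (delG G i) k ⟨j, hji⟩)) := by
        intro k
        rw [hMik, hNinv]
      calc φm (χ.adjugate i j) = Mm.adjugate i j := (hadjM i j).symm
        _ = Mm⁻¹ i j * Mm.det := hadj_off
        _ = (Mm⁻¹ i i * ∑ k : {v // ¬ v = i},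
              (-(Mm i k.1)) * Nn⁻¹ k ⟨j, hji⟩) * Mm.det := by rw [hoff]
        _ = (Mm⁻¹ i i * Mm.det) * ∑ k : {v // ¬ v = i},
              (-(Mm i k.1)) * Nn⁻¹ k ⟨j, hji⟩ := by ring
        _ = Nn.det * ∑ k : {v // ¬ v = i},
              φm (C (A i k.1)) * ((Nn.det)⁻¹ * φm (pathSum (delG G i) k ⟨j, hji⟩)) := by
            rw [hinvdiag]
            congr 1
            exact Finset.sum_congr rfl (fun k _ => hterm k)
        _ = ∑ k : {v // ¬ v = i},
              φm (C (A i k.1) * pathSum (delG G i) k ⟨j, hji⟩) := by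
            rw [Finset.mul_sum]
            apply Finset.sum_congr rfl
            intro k _
            rw [_root_.map_mul]
            rw [mul_left_comm, mul_inv_cancel_left₀ hdetN0]
        _ = φm (∑ k : {v // ¬ v = i},
              C (A i k.1) * pathSum (delG G i) k ⟨j, hji⟩) := by rw [map_sum]
        _ = φm (pathSum G i j) := by rw [← pathSum_rec G i j hji]

theorem offdiagonal_entry_partial_fractions {V : Type*} [Fintype V] [DecidableEq V]
    (G : SimpleGraph V) [DecidableRel G.Adj] (i j : V)
    -- spectral decomposition of the adjacency matrix into distinct eigenvalues `Φ`
    -- with orthogonal eigenprojectors `E θ`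
    (Φ : Finset ℝ) (E : ℝ → Matrix V V ℝ)
    (hdecomp : G.adjMatrix ℝ = ∑ θ ∈ Φ, θ • E θ)
    (hsym : ∀ θ ∈ Φ, (E θ).IsSymm)
    (hidem : ∀ θ ∈ Φ, E θ * E θ = E θ)
    (horth : ∀ θ ∈ Φ, ∀ θ' ∈ Φ, θ ≠ θ' → E θ * E θ' = 0)
    (hsum : ∑ θ ∈ Φ, E θ = 1) :
    ∀ t : ℝ, (phiDel G ∅).eval t ≠ 0 →
      (pathSum G i j).eval t / (phiDel G ∅).eval t = ∑ θ ∈ Φ, (E θ) i j / (t - θ) := by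
  intro t ht
  classical
  have hphi : phiDel G ∅ = (G.adjMatrix ℝ).charpoly := phiDel_empty G
  rw [hphi] at ht ⊢
  set A := G.adjMatrix ℝ with hA
  set ev : ℝ[X] →+* ℝ := evalRingHom t with hev
  set Mt : Matrix V V ℝ := (charmatrix A).map ev with hMt
  have hdet : Mt.det = A.charpoly.eval t := by
    have h0 : A.charpoly.eval t = ev A.charpoly := rfl
    rw [h0, Matrix.charpoly, RingHom.map_det, RingHom.mapMatrix_apply]
  have hdet0 : Mt.det ≠ 0 := by rw [hdet]; exact ht
  have hMtform : Mt = t • (1 : Matrix V V ℝ) - A := by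
    ext a b
    by_cases h : a = b
    · subst h
      simp [hMt, charmatrix_apply, Matrix.map_apply, Matrix.one_apply,
        Matrix.smul_apply, Matrix.sub_apply, hev]
    · simp [hMt, charmatrix_apply, Matrix.map_apply, Matrix.one_apply, h,
        Matrix.smul_apply, Matrix.sub_apply, Matrix.diagonal_apply, hev]
  have hAE : ∀ θ ∈ Φ, A * E θ = θ • E θ := by
    intro θ hθ
    rw [hdecomp, Finset.sum_mul, Finset.sum_eq_single θ]
    · rw [Matrix.smul_mul, hidem θ hθ]
    · intro θ' hθ' hne
      rw [Matrix.smul_mul, horth θ' hθ' θ hθ hne, smul_zero]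
    · intro h; exact absurd hθ h
  have hME : ∀ θ ∈ Φ, Mt * E θ = (t - θ) • E θ := by
    intro θ hθ
    rw [hMtform, Matrix.sub_mul, Matrix.smul_mul, Matrix.one_mul, hAE θ hθ, sub_smul]
  have hE0 : ∀ θ ∈ Φ, t = θ → E θ = 0 := by
    intro θ hθ htθ
    have h1 : Mt * E θ = 0 := by rw [hME θ hθ, htθ]; simp
    calc E θ = (Mt⁻¹ * Mt) * E θ := by
          rw [Matrix.nonsing_inv_mul Mt (isUnit_iff_ne_zero.mpr hdet0), Matrix.one_mul]
      _ = Mt⁻¹ * (Mt * E θ) := by rw [Matrix.mul_assoc]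
      _ = 0 := by rw [h1, Matrix.mul_zero]
  set B : Matrix V V ℝ := ∑ θ ∈ Φ, (t - θ)⁻¹ • E θ with hB
  have hMtB : Mt * B = 1 := by
    rw [hB, Finset.mul_sum, ← hsum]
    apply Finset.sum_congr rfl
    intro θ hθ
    rw [Matrix.mul_smul, hME θ hθ, smul_smul]
    by_cases h : t = θ
    · rw [hE0 θ hθ h]; simp
    · rw [inv_mul_cancel₀ (sub_ne_zero.mpr h), one_smul]
  have hMinv : Mt⁻¹ = B := Matrix.inv_eq_right_inv hMtB
  have hkey := key_aux (Fintype.card V) G (le_refl _) i j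
  have hadj : Mt.adjugate i j = (pathSum G i j).eval t := by
    have h1 := congrFun (congrFun (RingHom.map_adjugate ev (charmatrix A)) i) j
    simp only [RingHom.mapMatrix_apply, Matrix.map_apply] at h1
    rw [hMt, ← h1, hkey]
    rfl
  have hfinal : Mt⁻¹ i j = (pathSum G i j).eval t / A.charpoly.eval t := by
    rw [Matrix.inv_def]
    simp [Matrix.smul_apply, Ring.inverse_eq_inv, smul_eq_mul]
    rw [hadj, hdet, div_eq_mul_inv, mul_comm]
  rw [← hfinal, hMinv, hB]
  simp only [Matrix.sum_apply, Matrix.smul_apply, smul_eq_mul]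
  apply Finset.sum_congr rfl
  intro θ hθ
  rw [div_eq_inv_mul]
end
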